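/- arXiv:1903.07841 — 5 statements merged into one kernel-verified Lean document; each statement's English description precedes it below -/
import Mathlib

section
/- For every composite integer n ≥ 4, the graph Υ_n is connected. -/
open scoped BigOperators

/-- The proper divisors of `n`: the divisors `d` of `n` with `1 < d < n`. -/
def properDivs (n : ℕ) : Finset ℕ :=
  (Nat.divisors n).filter fun d => 1 < d ∧ d < n

/-- The graph `Υ_n` on the proper divisors of `n`, where distinct `d_i`, `d_j` are
adjacent iff `n ∣ d_i * d_j`. -/
def upsilon (n : ℕ) : SimpleGraph {d // d ∈ properDivs n} where
  Adj a b := a ≠ b ∧ n ∣ a.val * b.val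
  symm := by
    constructor
    rintro a b ⟨hne, h⟩
    exact ⟨hne.symm, by rwa [mul_comm]⟩
  loopless := ⟨fun a h => h.1 rfl⟩

instance (n : ℕ) : DecidableRel (upsilon n).Adj :=
  fun a b => inferInstanceAs (Decidable (a ≠ b ∧ n ∣ a.val * b.val))

/-- For every composite `n ≥ 4`, the graph `Υ_n` is connected. -/
theorem upsilon_connected (n : ℕ) (hn : 4 ≤ n) (hcomp : ¬ n.Prime) :
    (upsilon n).Connected := by
  have hn0 : n ≠ 0 := by omega
  have hpp : n.minFac.Prime := Nat.minFac_prime (by omega)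
  set p := n.minFac with hp
  have hpd : p ∣ n := Nat.minFac_dvd n
  have hp1 : 1 < p := hpp.one_lt
  obtain ⟨h, hh⟩ := hpd
  have hh1 : 1 < h := by
    rcases h with _ | _ | h
    · omega
    · simp only [Nat.zero_add, mul_one] at hh
      exact absurd (hh ▸ hpp) hcomp
    · omega
  have hhn : h < n := by nlinarith
  have hmem : ∀ d : ℕ, d ∣ n → 1 < d → d < n → d ∈ properDivs n := by
    intro d hd h1 h2
    simp [properDivs, Nat.mem_divisors, hn0, hd, h1, h2]
  have hhd : h ∣ n := ⟨p, by rw [hh, mul_comm]⟩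
  set vh : {d // d ∈ properDivs n} := ⟨h, hmem h hhd hh1 hhn⟩ with hvh
  -- every vertex divisible by p is reachable to vh
  have reach1 : ∀ v : {d // d ∈ properDivs n}, p ∣ v.val →
      (upsilon n).Reachable v vh := by
    rintro ⟨d, hd⟩ hpv
    by_cases hdh : d = h
    · subst hdh; exact SimpleGraph.Reachable.refl _
    · obtain ⟨c, hc⟩ := hpv
      refine SimpleGraph.Adj.reachable ?_
      have hc' : d = p * c := hc
      refine ⟨by simp [hvh, Subtype.ext_iff, hdh], ⟨c, ?_⟩⟩
      show d * h = n * c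
      rw [hc', hh]; ring
  have reach : ∀ v : {d // d ∈ properDivs n}, (upsilon n).Reachable v vh := by
    rintro ⟨d, hd⟩
    have hd' : d ∣ n ∧ 1 < d ∧ d < n := by
      simpa [properDivs, Nat.mem_divisors, hn0] using hd
    obtain ⟨hdvd, hd1, hdn⟩ := hd'
    by_cases hpdvd : p ∣ d
    · exact reach1 _ hpdvd
    · have hed' : (n / d) * d = n := Nat.div_mul_cancel hdvd
      obtain ⟨e, hE, hed⟩ : ∃ e, n / d = e ∧ e * d = n := ⟨n / d, rfl, hed'⟩
      have hpe : p ∣ e := by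
        have : p ∣ e * d := by rw [hed]; exact Nat.minFac_dvd n
        rcases (hpp.dvd_mul.mp this) with h' | h'
        · exact h'
        · exact absurd h' hpdvd
      have he1 : 1 < e := by
        have h0 : e ≠ 0 := by rintro h0; rw [h0, zero_mul] at hed; omega
        have h1 : e ≠ 1 := by rintro h1; rw [h1, one_mul] at hed; omega
        omega
      have hen : e < n := by nlinarith
      have heM : e ∈ properDivs n := hmem e ⟨d, by rw [← hed, mul_comm]⟩ he1 hen
      have hde : d ≠ e := by
        rintro rfl; exact hpdvd hpe
      have adj : (upsilon n).Adj ⟨d, hd⟩ ⟨e, heM⟩ := by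
        refine ⟨by simp [Subtype.ext_iff, hde], ⟨1, by rw [mul_one, mul_comm, hed]⟩⟩
      exact adj.reachable.trans (reach1 ⟨e, heM⟩ hpe)
  rw [SimpleGraph.connected_iff]
  exact ⟨fun u v => (reach u).trans (reach v).symm, ⟨vh⟩⟩
end

section
/- Let n ≥ 4 be a composite integer with proper divisors d_1, d_2, …, d_k, and let Γ(A_{d_i}) be the induced subgraph of Γ(Z_n) on the vertex set A_{d_i} for 1 ≤ i ≤ k. Then the zero divisor graph Γ(Z_n) is equal to the Υ_n-generalized join graph Υ_n[Γ(A_{d_1}), Γ(A_{d_2}), …, Γ(A_{d_k})]. -/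
open scoped BigOperators

/-- Vertex set of the zero divisor graph of `ZMod n`: the nonzero zero divisors. -/
abbrev ZdVert (n : ℕ) : Type :=
  {x : ZMod n // x ≠ 0 ∧ ∃ y : ZMod n, y ≠ 0 ∧ x * y = 0}

/-- The zero divisor graph `Γ(ZMod n)`: vertices are the nonzero zero divisors, and two
distinct vertices are adjacent iff their product is zero. -/
def zdGraph (n : ℕ) : SimpleGraph (ZdVert n) where
  Adj a b := a ≠ b ∧ (a : ZMod n) * (b : ZMod n) = 0
  symm := by
    constructor
    rintro a b ⟨hne, h⟩
    exact ⟨hne.symm, by rwa [mul_comm]⟩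
  loopless := ⟨fun a h => h.1 rfl⟩

instance (n : ℕ) : DecidableRel (zdGraph n).Adj :=
  fun a b => inferInstanceAs (Decidable (a ≠ b ∧ (a : ZMod n) * (b : ZMod n) = 0))

instance (n : ℕ) (s : Set (ZdVert n)) [DecidablePred (· ∈ s)] :
    DecidableRel ((zdGraph n).induce s).Adj :=
  fun a b => inferInstanceAs (Decidable ((zdGraph n).Adj a b))

/-- The set `A_d = {x ∈ ZMod n : gcd(x, n) = d}`, viewed inside the vertex set of the
zero divisor graph. -/
def fiberSet (n : ℕ) (d : ℕ) : Set (ZdVert n) :=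
  {v | Nat.gcd (v : ZMod n).val n = d}

instance (n d : ℕ) : DecidablePred (· ∈ fiberSet n d) :=
  fun v => inferInstanceAs (Decidable (Nat.gcd (v : ZMod n).val n = d))

/-- The `G`-generalized join of the family of graphs `H i`: each vertex `i` of `G` is
replaced by the graph `H i`, and every vertex of `H i` is joined to every vertex of
`H j` whenever `i` and `j` are adjacent in `G`. -/
def generalizedJoin {ι : Type*} {V : ι → Type*} (G : SimpleGraph ι)
    (H : ∀ i, SimpleGraph (V i)) : SimpleGraph (Σ i, V i) where
  Adj a b := G.Adj a.1 b.1 ∨ ∃ h : a.1 = b.1, (H b.1).Adj (h ▸ a.2) b.2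
  symm := by
    constructor
    intro a b hab
    obtain ⟨i, x⟩ := a
    obtain ⟨j, y⟩ := b
    dsimp only at hab ⊢
    rcases hab with h | ⟨h, hadj⟩
    · exact Or.inl h.symm
    · subst h
      exact Or.inr ⟨rfl, hadj.symm⟩
  loopless := by
    constructor
    intro a ha
    obtain ⟨i, x⟩ := a
    dsimp only at ha
    rcases ha with h | ⟨h, hadj⟩
    · exact G.irrefl h
    · exact (H i).irrefl hadj

lemma aux_dvd_gcd_mul_gcd {a b n : ℕ} (h : n ∣ a * b) :
    n ∣ Nat.gcd a n * Nat.gcd b n := by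
  rw [← Nat.gcd_mul_right]
  refine Nat.dvd_gcd ?_ (dvd_mul_right n _)
  rw [← Nat.gcd_mul_left]
  exact Nat.dvd_gcd h (dvd_mul_left n a)

lemma aux_cast_coe {n : ℕ} {d1 d2 : {d // d ∈ properDivs n}} (h : d1 = d2)
    (z : {x // x ∈ fiberSet n d1.val}) :
    ((h ▸ z : {x // x ∈ fiberSet n d2.val}) : ZdVert n) = (z : ZdVert n) := by
  subst h; rfl

/-- For composite `n ≥ 4` with proper divisors `d_1, …, d_k`, the zero divisor graph
`Γ(ZMod n)` is (canonically isomorphic to, fixing each vertex) the `Υ_n`-generalized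
join `Υ_n[Γ(A_{d_1}), …, Γ(A_{d_k})]` of the induced subgraphs on the sets `A_d`. -/
theorem zdGraph_eq_generalizedJoin (n : ℕ) (hn : 4 ≤ n) (hcomp : ¬ n.Prime) :
    ∃ e : zdGraph n ≃g generalizedJoin (upsilon n)
        (fun d => (zdGraph n).induce (fiberSet n d.val)),
      ∀ v : ZdVert n, ((e v).2 : ZdVert n) = v := by
  haveI : NeZero n := ⟨by omega⟩
  have hvalne : ∀ v : ZdVert n, (v : ZMod n).val ≠ 0 := by
    intro v hv
    exact v.2.1 ((ZMod.val_eq_zero _).1 hv)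
  have hdvd : ∀ x y : ZMod n, x * y = 0 ↔ n ∣ x.val * y.val := by
    intro x y
    rw [← ZMod.natCast_eq_zero_iff, Nat.cast_mul,
      ZMod.natCast_rightInverse x, ZMod.natCast_rightInverse y]
  have hdiv : ∀ v : ZdVert n, Nat.gcd (v : ZMod n).val n ∈ properDivs n := by
    intro v
    simp only [properDivs, Finset.mem_filter, Nat.mem_divisors]
    refine ⟨⟨Nat.gcd_dvd_right _ _, NeZero.ne n⟩, ?_, ?_⟩
    · rcases Nat.lt_or_ge 1 (Nat.gcd (v : ZMod n).val n) with h | h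
      · exact h
      exfalso
      have hpos : 0 < Nat.gcd (v : ZMod n).val n :=
        Nat.gcd_pos_of_pos_right _ (by omega)
      have hg : Nat.gcd (v : ZMod n).val n = 1 := by omega
      have hu : IsUnit (v : ZMod n) := by
        rw [← ZMod.natCast_rightInverse (v : ZMod n)]
        exact (ZMod.isUnit_iff_coprime _ _).2 hg
      obtain ⟨_, _, y, hy0, hxy⟩ := v
      exact hy0 ((hu.mul_right_eq_zero).1 hxy)
    · calc Nat.gcd (v : ZMod n).val n ≤ (v : ZMod n).val :=
            Nat.gcd_le_left _ (Nat.pos_of_ne_zero (hvalne v))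
        _ < n := ZMod.val_lt _
  refine ⟨⟨Equiv.mk
      (fun v => ⟨⟨Nat.gcd (v : ZMod n).val n, hdiv v⟩, ⟨v, rfl⟩⟩)
      (fun s => (s.2 : ZdVert n))
      (fun v => rfl)
      (fun s => by
        obtain ⟨⟨d, hd⟩, x, hx⟩ := s
        have hx' : Nat.gcd (x : ZMod n).val n = d := hx
        subst hx'
        rfl), ?_⟩, fun v => rfl⟩
  intro a b
  simp only [Equiv.coe_fn_mk]
  constructor
  · rintro (⟨hne, hd⟩ | ⟨h, hadj⟩)
    · refine ⟨fun hab => hne (by rw [hab]), ?_⟩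
      rw [hdvd]
      exact dvd_trans hd
        (mul_dvd_mul (Nat.gcd_dvd_left _ _) (Nat.gcd_dvd_left _ _))
    · simp only [SimpleGraph.comap_adj, Function.Embedding.coe_subtype] at hadj
      rwa [aux_cast_coe h] at hadj
  · rintro ⟨hne, hmul⟩
    by_cases hde : (⟨Nat.gcd (a : ZMod n).val n, hdiv a⟩ : {d // d ∈ properDivs n}) =
        ⟨Nat.gcd (b : ZMod n).val n, hdiv b⟩
    · refine Or.inr ⟨hde, ?_⟩
      show (zdGraph n).Adj _ _
      simp only [Function.Embedding.coe_subtype]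
      rw [aux_cast_coe hde]
      exact ⟨hne, hmul⟩
    · exact Or.inl ⟨hde, aux_dvd_gcd_mul_gcd ((hdvd _ _).1 hmul)⟩
end

section
/- Let n ≥ 4 be a composite integer. The zero divisor graph Γ(Z_n) is Laplacian integral if and only if all eigenvalues of the vertex weighted Laplacian matrix L(Υ_n) are integers. -/
open scoped BigOperators

/-- `M_d`: the sum of the weights `φ(n/e)` over the neighbours `e` of `d` in `Υ_n`. -/
def Mweight (n : ℕ) (d : {d // d ∈ properDivs n}) : ℕ :=
  ∑ e ∈ Finset.univ.filter (fun e => (upsilon n).Adj d e), Nat.totient (n / e.val)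

/-- The vertex weighted Laplacian matrix `L(Υ_n)` of `Υ_n`, where the vertex `d` of `Υ_n`
carries the weight `φ(n/d)`. -/
noncomputable def wLap (n : ℕ) :
    Matrix {d // d ∈ properDivs n} {d // d ∈ properDivs n} ℝ :=
  fun i j =>
    if i = j then (Mweight n i : ℝ)
    else if (upsilon n).Adj i j then -(Nat.totient (n / j.val) : ℝ)
    else 0

namespace ZDaux

open Finset

variable (n : ℕ) [NeZero n]

lemma mem_properDivs {d : ℕ} : d ∈ properDivs n ↔ d ∣ n ∧ 1 < d ∧ d < n := by
  simp [properDivs, Nat.mem_divisors, NeZero.ne n]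

lemma gcd_mem (v : ZdVert n) : Nat.gcd (v : ZMod n).val n ∈ properDivs n := by
  obtain ⟨hx0, y, hy0, hxy⟩ := v.2
  have hvpos : 0 < (v : ZMod n).val :=
    Nat.pos_of_ne_zero (fun h => hx0 ((ZMod.val_eq_zero _).mp h))
  refine (mem_properDivs n).mpr ⟨Nat.gcd_dvd_right _ _, ?_, ?_⟩
  · rcases Nat.lt_or_ge (Nat.gcd (v : ZMod n).val n) 2 with h | h
    · exfalso
      interval_cases hg : Nat.gcd (v : ZMod n).val n
      · exact (NeZero.ne n) (Nat.eq_zero_of_gcd_eq_zero_right hg)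
      · have hunit : IsUnit ((v : ZMod n)) := by
          have := (ZMod.isUnit_iff_coprime ((v : ZMod n)).val n).mpr hg
          rwa [ZMod.natCast_zmod_val] at this
        exact hy0 ((IsUnit.mul_right_eq_zero hunit).mp hxy)
    · exact h
  · exact lt_of_le_of_lt (Nat.le_of_dvd hvpos (Nat.gcd_dvd_left _ _)) (v : ZMod n).val_lt

/-- The fiber map sending a vertex of the zero divisor graph to its gcd with `n`. -/
def fdiv (v : ZdVert n) : {d // d ∈ properDivs n} :=
  ⟨Nat.gcd (v : ZMod n).val n, gcd_mem n v⟩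

lemma dvd_mul_iff_gcd (a b : ℕ) : n ∣ a * b ↔ n ∣ Nat.gcd a n * Nat.gcd b n := by
  have npos : 0 < n := Nat.pos_of_ne_zero (NeZero.ne n)
  constructor
  · intro h
    have hd0 : 0 < Nat.gcd a n := Nat.gcd_pos_of_pos_right a npos
    have hcop : Nat.Coprime (a / Nat.gcd a n) (n / Nat.gcd a n) :=
      Nat.coprime_div_gcd_div_gcd hd0
    have hn' : Nat.gcd a n * (n / Nat.gcd a n) = n := Nat.mul_div_cancel' (Nat.gcd_dvd_right a n)
    have ha' : Nat.gcd a n * (a / Nat.gcd a n) = a := Nat.mul_div_cancel' (Nat.gcd_dvd_left a n)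
    have h1 : (n / Nat.gcd a n) ∣ (a / Nat.gcd a n) * b := by
      have h2 : Nat.gcd a n * (n / Nat.gcd a n) ∣ Nat.gcd a n * ((a / Nat.gcd a n) * b) := by
        rw [hn', ← mul_assoc, ha']; exact h
      exact (mul_dvd_mul_iff_left hd0.ne').mp h2
    have h3 : (n / Nat.gcd a n) ∣ b := (hcop.symm).dvd_of_dvd_mul_left h1
    have h4 : (n / Nat.gcd a n) ∣ Nat.gcd b n :=
      Nat.dvd_gcd h3 (Nat.div_dvd_of_dvd (Nat.gcd_dvd_right a n))
    calc n = Nat.gcd a n * (n / Nat.gcd a n) := hn'.symm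
      _ ∣ Nat.gcd a n * Nat.gcd b n := mul_dvd_mul_left _ h4
  · intro h
    exact h.trans (Nat.mul_dvd_mul (Nat.gcd_dvd_left a n) (Nat.gcd_dvd_left b n))

lemma adj_iff (x y : ZdVert n) :
    (zdGraph n).Adj x y ↔ x ≠ y ∧ n ∣ (fdiv n x).1 * (fdiv n y).1 := by
  have key : (x : ZMod n) * (y : ZMod n) = 0 ↔ n ∣ (x : ZMod n).val * (y : ZMod n).val := by
    rw [show (x : ZMod n) * (y : ZMod n) = (((x : ZMod n).val * (y : ZMod n).val : ℕ) : ZMod n) by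
      push_cast [ZMod.natCast_zmod_val]; ring]
    exact ZMod.natCast_eq_zero_iff _ _
  constructor
  · rintro ⟨hne, hmul⟩
    exact ⟨hne, (dvd_mul_iff_gcd n _ _).mp (key.mp hmul)⟩
  · rintro ⟨hne, hdvd⟩
    exact ⟨hne, key.mpr ((dvd_mul_iff_gcd n _ _).mpr hdvd)⟩

lemma card_fiber (d : {d // d ∈ properDivs n}) :
    #{v : ZdVert n | fdiv n v = d} = Nat.totient (n / d.1) := by
  obtain ⟨hdvd, hd1, hdn⟩ := (mem_properDivs n).mp d.2
  have npos : 0 < n := Nat.pos_of_ne_zero (NeZero.ne n)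
  rw [Nat.totient_div_of_dvd hdvd]
  apply Finset.card_bij (fun (v : ZdVert n) _ => (v : ZMod n).val)
  · intro v hv
    have hfd : Nat.gcd (v : ZMod n).val n = d.1 :=
      congrArg Subtype.val ((mem_filter.mp hv).2)
    simp only [mem_filter, mem_range]
    exact ⟨(v : ZMod n).val_lt, by rw [Nat.gcd_comm]; exact hfd⟩
  · intro a _ b _ hab
    apply Subtype.ext
    rw [← ZMod.natCast_zmod_val (a : ZMod n), ← ZMod.natCast_zmod_val (b : ZMod n), hab]
  · intro k hk
    obtain ⟨hklt, hkg⟩ := mem_filter.mp hk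
    rw [mem_range] at hklt
    have hk0 : k ≠ 0 := by
      rintro rfl
      rw [Nat.gcd_zero_right] at hkg
      exact absurd hkg hdn.ne'
    have hdk : d.1 ∣ k := hkg ▸ Nat.gcd_dvd_right n k
    have hndpos : 0 < n / d.1 := Nat.div_pos (Nat.le_of_dvd npos hdvd) (lt_trans Nat.zero_lt_one hd1)
    have hndlt : n / d.1 < n := Nat.div_lt_self npos hd1
    have hy0 : ((n / d.1 : ℕ) : ZMod n) ≠ 0 := by
      rw [Ne, ZMod.natCast_eq_zero_iff]
      intro hcontra
      exact absurd (Nat.le_of_dvd hndpos hcontra) (not_le.mpr hndlt)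
    have hx0 : ((k : ℕ) : ZMod n) ≠ 0 := by
      rw [Ne, ZMod.natCast_eq_zero_iff]
      intro hcontra
      exact hk0 (Nat.eq_zero_of_dvd_of_lt hcontra hklt)
    have hmul : ((k : ℕ) : ZMod n) * ((n / d.1 : ℕ) : ZMod n) = 0 := by
      rw [← Nat.cast_mul, ZMod.natCast_eq_zero_iff]
      obtain ⟨m, hm⟩ := hdk
      rw [hm, mul_comm d.1 m, mul_assoc, Nat.mul_div_cancel' hdvd]
      exact dvd_mul_left n m
    refine ⟨⟨((k : ℕ) : ZMod n), hx0, ⟨_, hy0, hmul⟩⟩, ?_, ?_⟩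
    · simp only [mem_filter, mem_univ, true_and]
      apply Subtype.ext
      show Nat.gcd (((k : ℕ) : ZMod n)).val n = d.1
      rw [ZMod.val_natCast_of_lt hklt, Nat.gcd_comm]
      exact hkg
    · exact ZMod.val_natCast_of_lt hklt

end ZDaux
namespace ZDaux

open Finset

variable (n : ℕ) [NeZero n]

/-- Sum of a function over the fiber of `d`. -/
noncomputable def Qv (u : ZdVert n → ℂ) (d : {d // d ∈ properDivs n}) : ℂ :=
  ∑ v ∈ {v : ZdVert n | fdiv n v = d}, u v

lemma Qv_smul (z : ℂ) (u : ZdVert n → ℂ) (d : {d // d ∈ properDivs n}) :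
    Qv n (z • u) d = z * Qv n u d := by
  simp [Qv, Finset.mul_sum]

/-- Master lemma: a neighbour sum in the zero divisor graph decomposes fiberwise. -/
lemma nb_sum (u : ZdVert n → ℂ) (x : ZdVert n) :
    ∑ y ∈ (zdGraph n).neighborFinset x, u y
      = (∑ e ∈ {e | (upsilon n).Adj (fdiv n x) e}, Qv n u e)
        + (if n ∣ (fdiv n x).1 * (fdiv n x).1 then Qv n u (fdiv n x) - u x else 0) := by
  classical
  set d := fdiv n x with hd
  -- Step A: rewrite neighbour finset via the divisibility characterisation
  have hA : (zdGraph n).neighborFinset x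
      = ({y : ZdVert n | n ∣ d.1 * (fdiv n y).1} : Finset _).erase x := by
    ext y
    simp only [SimpleGraph.mem_neighborFinset, mem_erase, mem_filter, mem_univ, true_and,
      Set.mem_setOf_eq]
    rw [adj_iff]
    constructor
    · rintro ⟨hne, hdvd⟩; exact ⟨hne.symm, hdvd⟩
    · rintro ⟨hne, hdvd⟩; exact ⟨hne.symm, hdvd⟩
  rw [hA]
  -- Step B: full sum over the divisibility set, fiberwise
  have hB : ∑ y ∈ ({y : ZdVert n | n ∣ d.1 * (fdiv n y).1} : Finset _), u y
      = ∑ e ∈ ({e | n ∣ d.1 * e.1} : Finset {d // d ∈ properDivs n}), Qv n u e := by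
    rw [Finset.sum_filter]
    rw [← Finset.sum_fiberwise (Finset.univ) (fdiv n)
      (fun y => if n ∣ d.1 * (fdiv n y).1 then u y else 0)]
    rw [Finset.sum_filter]
    refine Finset.sum_congr rfl fun e _ => ?_
    rw [Qv]
    by_cases he : n ∣ d.1 * e.1
    · rw [if_pos he]
      refine Finset.sum_congr rfl fun y hy => ?_
      have : fdiv n y = e := by simpa using (Finset.mem_filter.mp hy).2
      rw [this, if_pos he]
    · rw [if_neg he]
      refine Finset.sum_eq_zero fun y hy => ?_
      have : fdiv n y = e := by simpa using (Finset.mem_filter.mp hy).2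
      rw [this, if_neg he]
  -- Step C: erase the self-divisor from the divisor sum
  have hC : ∑ e ∈ ({e | n ∣ d.1 * e.1} : Finset {d // d ∈ properDivs n}), Qv n u e
      = (∑ e ∈ ({e | (upsilon n).Adj d e} : Finset _), Qv n u e)
        + (if n ∣ d.1 * d.1 then Qv n u d else 0) := by
    have hset : ({e | (upsilon n).Adj d e} : Finset {d // d ∈ properDivs n})
        = ({e | n ∣ d.1 * e.1} : Finset _).erase d := by
      ext e
      simp only [mem_erase, mem_filter, mem_univ, true_and, Set.mem_setOf_eq]
      show (d ≠ e ∧ n ∣ d.1 * e.1) ↔ _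
      constructor
      · rintro ⟨hne, hdvd⟩; exact ⟨hne.symm, hdvd⟩
      · rintro ⟨hne, hdvd⟩; exact ⟨hne.symm, hdvd⟩
    rw [hset]
    by_cases hc : n ∣ d.1 * d.1
    · rw [if_pos hc, Finset.sum_erase_eq_sub (by simpa using hc)]
      ring
    · rw [if_neg hc, Finset.erase_eq_of_notMem (by simpa using hc), add_zero]
  -- Step D: erase x from the vertex sum
  by_cases hc : n ∣ d.1 * d.1
  · rw [Finset.sum_erase_eq_sub (by simpa using hc), hB, hC, if_pos hc, if_pos hc]
    ring
  · rw [Finset.erase_eq_of_notMem (by simpa using hc), hB, hC, if_neg hc, if_neg hc, add_zero]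

lemma qv_one (e : {d // d ∈ properDivs n}) :
    Qv n (fun _ => (1 : ℂ)) e = (Nat.totient (n / e.1) : ℂ) := by
  rw [Qv, Finset.sum_const, ← card_fiber n e, nsmul_eq_mul, mul_one]

lemma deg_eq (x : ZdVert n) :
    ((zdGraph n).degree x : ℂ)
      = (Mweight n (fdiv n x) : ℂ)
        + (if n ∣ (fdiv n x).1 * (fdiv n x).1
            then (Nat.totient (n / (fdiv n x).1) : ℂ) - 1 else 0) := by
  have h := nb_sum n (fun _ => (1 : ℂ)) x
  rw [Finset.sum_const] at h
  have hdeg : ((zdGraph n).degree x : ℂ)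
      = ((zdGraph n).neighborFinset x).card • (1 : ℂ) := by
    rw [SimpleGraph.degree, nsmul_eq_mul, mul_one]
  rw [hdeg, h, Mweight, Nat.cast_sum]
  congr 1
  · exact Finset.sum_congr rfl fun e _ => qv_one n e
  · by_cases hc : n ∣ (fdiv n x).1 * (fdiv n x).1
    · rw [if_pos hc, if_pos hc, qv_one]
    · rw [if_neg hc, if_neg hc]

lemma qv_comp (v : {d // d ∈ properDivs n} → ℂ) (e : {d // d ∈ properDivs n}) :
    Qv n (fun y => v (fdiv n y)) e = (Nat.totient (n / e.1) : ℂ) * v e := by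
  rw [Qv]
  rw [Finset.sum_congr rfl (fun y hy => by
    rw [show fdiv n y = e by simpa using (Finset.mem_filter.mp hy).2])]
  rw [Finset.sum_const, ← card_fiber n e, nsmul_eq_mul]

lemma map_lap :
    ((zdGraph n).lapMatrix ℝ).map Complex.ofReal = (zdGraph n).lapMatrix ℂ := by
  ext i j
  simp only [Matrix.map_apply, SimpleGraph.lapMatrix, Matrix.sub_apply,
    SimpleGraph.degMatrix, SimpleGraph.adjMatrix, Matrix.of_apply, Matrix.diagonal_apply]
  split_ifs <;> simp

lemma wLap_mulVec (v : {d // d ∈ properDivs n} → ℂ) (d : {d // d ∈ properDivs n}) :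
    (((wLap n).map Complex.ofReal).mulVec v) d
      = (Mweight n d : ℂ) * v d
        - ∑ e ∈ {e | (upsilon n).Adj d e}, (Nat.totient (n / e.1) : ℂ) * v e := by
  classical
  unfold Matrix.mulVec dotProduct
  have step : ∀ e, ((wLap n).map Complex.ofReal) d e * v e
      = (if d = e then (Mweight n d : ℂ) * v e else 0)
        + (if (upsilon n).Adj d e then -(Nat.totient (n / e.1) : ℂ) * v e else 0) := by
    intro e
    simp only [Matrix.map_apply, wLap]
    by_cases h1 : d = e
    · subst h1
      rw [if_pos rfl, if_pos rfl, if_neg ((upsilon n).loopless.irrefl d), add_zero]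
      push_cast; ring
    · rw [if_neg h1, if_neg h1]
      by_cases h2 : (upsilon n).Adj d e
      · rw [if_pos h2, if_pos h2, zero_add]; push_cast; ring
      · rw [if_neg h2, if_neg h2, add_zero, Complex.ofReal_zero, zero_mul]
  rw [Finset.sum_congr rfl fun e _ => step e, Finset.sum_add_distrib,
    Finset.sum_ite_eq Finset.univ d (fun e => (Mweight n d : ℂ) * v e), if_pos (mem_univ d),
    ← Finset.sum_filter, sub_eq_add_neg, ← Finset.sum_neg_distrib]
  congr 1
  exact Finset.sum_congr rfl fun e _ => by ring

end ZDaux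
namespace ZDaux

open Finset Matrix

variable (n : ℕ) [NeZero n]

set_option linter.unusedSectionVars false

lemma wLapT_mulVec (q : {d // d ∈ properDivs n} → ℂ) (d : {d // d ∈ properDivs n}) :
    ((((wLap n).map Complex.ofReal)ᵀ).mulVec q) d
      = (Mweight n d : ℂ) * q d
        - (Nat.totient (n / d.1) : ℂ) * ∑ e ∈ {e | (upsilon n).Adj d e}, q e := by
  classical
  unfold Matrix.mulVec dotProduct
  have step : ∀ e, (((wLap n).map Complex.ofReal)ᵀ) d e * q e
      = (if d = e then (Mweight n d : ℂ) * q e else 0)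
        + (if (upsilon n).Adj d e then -(Nat.totient (n / d.1) : ℂ) * q e else 0) := by
    intro e
    simp only [Matrix.transpose_apply, Matrix.map_apply, wLap]
    by_cases h1 : d = e
    · subst h1
      rw [if_pos rfl, if_pos rfl, if_neg ((upsilon n).loopless.irrefl d), add_zero]
      push_cast; ring
    · rw [if_neg (fun h : e = d => h1 h.symm), if_neg h1]
      by_cases h2 : (upsilon n).Adj d e
      · rw [if_pos h2.symm, if_pos h2, zero_add]; push_cast; ring
      · rw [if_neg (fun h => h2 h.symm), if_neg h2, add_zero, Complex.ofReal_zero, zero_mul]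
  rw [Finset.sum_congr rfl fun e _ => step e, Finset.sum_add_distrib,
    Finset.sum_ite_eq Finset.univ d (fun e => (Mweight n d : ℂ) * q e), if_pos (mem_univ d),
    ← Finset.sum_filter, Finset.mul_sum, sub_eq_add_neg, ← Finset.sum_neg_distrib]
  congr 1
  exact Finset.sum_congr rfl fun e _ => by ring

/-- `P` intertwines: `L (v ∘ f) = (W v) ∘ f`. -/
lemma lap_comp (v : {d // d ∈ properDivs n} → ℂ) (x : ZdVert n) :
    (((zdGraph n).lapMatrix ℂ).mulVec (fun y => v (fdiv n y))) x
      = (((wLap n).map Complex.ofReal).mulVec v) (fdiv n x) := by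
  rw [SimpleGraph.lapMatrix_mulVec_apply, nb_sum, wLap_mulVec, deg_eq,
    Finset.sum_congr rfl fun e _ => qv_comp n v e, qv_comp]
  by_cases hc : n ∣ (fdiv n x).1 * (fdiv n x).1
  · simp only [if_pos hc]; ring
  · simp only [if_neg hc]; ring

/-- `Q` intertwines: `Q (L u) = Wᵀ (Q u)`. -/
lemma Q_lap (u : ZdVert n → ℂ) (d : {d // d ∈ properDivs n}) :
    Qv n (((zdGraph n).lapMatrix ℂ).mulVec u) d
      = ((((wLap n).map Complex.ofReal)ᵀ).mulVec (fun e => Qv n u e)) d := by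
  classical
  rw [wLapT_mulVec, Qv]
  have step : ∀ x ∈ ({v : ZdVert n | fdiv n v = d} : Finset _),
      (((zdGraph n).lapMatrix ℂ).mulVec u) x
        = ((Mweight n d : ℂ)
            + (if n ∣ d.1 * d.1 then (Nat.totient (n / d.1) : ℂ) - 1 else 0)
            + (if n ∣ d.1 * d.1 then (1 : ℂ) else 0)) * u x
          + (-(∑ e ∈ {e | (upsilon n).Adj d e}, Qv n u e)
             - (if n ∣ d.1 * d.1 then Qv n u d else 0)) := by
    intro x hx
    have hfd : fdiv n x = d := by simpa using (Finset.mem_filter.mp hx).2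
    rw [SimpleGraph.lapMatrix_mulVec_apply, nb_sum, deg_eq, hfd]
    by_cases hc : n ∣ d.1 * d.1
    · simp only [if_pos hc]; ring
    · simp only [if_neg hc]; ring
  rw [Finset.sum_congr rfl step, Finset.sum_add_distrib, ← Finset.mul_sum, Finset.sum_const,
    card_fiber n d, nsmul_eq_mul]
  show _ * Qv n u d + _ = _
  by_cases hc : n ∣ d.1 * d.1
  · simp only [if_pos hc]; ring
  · simp only [if_neg hc]; ring

/-- Diagonal action on the kernel of `Q`. -/
lemma lap_diag (u : ZdVert n → ℂ) (hq : ∀ d, Qv n u d = 0) (x : ZdVert n) :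
    (((zdGraph n).lapMatrix ℂ).mulVec u) x
      = (((zdGraph n).degree x : ℂ)
          + (if n ∣ (fdiv n x).1 * (fdiv n x).1 then (1 : ℂ) else 0)) * u x := by
  rw [SimpleGraph.lapMatrix_mulVec_apply, nb_sum,
    Finset.sum_congr rfl (fun e _ => hq e), Finset.sum_const_zero, hq]
  by_cases hc : n ∣ (fdiv n x).1 * (fdiv n x).1
  · simp only [if_pos hc]; ring
  · simp only [if_neg hc]; ring

lemma spec_iff {ι : Type*} [Fintype ι] [DecidableEq ι] (M : Matrix ι ι ℂ) (z : ℂ) :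
    z ∈ spectrum ℂ M ↔ ∃ v, v ≠ 0 ∧ M.mulVec v = z • v := by
  rw [spectrum.mem_iff, Algebra.algebraMap_eq_smul_one, Matrix.isUnit_iff_isUnit_det,
    isUnit_iff_ne_zero, not_ne_iff, ← Matrix.exists_mulVec_eq_zero_iff]
  constructor
  · rintro ⟨v, hv0, hv⟩
    refine ⟨v, hv0, ?_⟩
    rw [Matrix.sub_mulVec, Matrix.smul_mulVec, Matrix.one_mulVec, sub_eq_zero] at hv
    exact hv.symm
  · rintro ⟨v, hv0, hv⟩
    refine ⟨v, hv0, ?_⟩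
    rw [Matrix.sub_mulVec, Matrix.smul_mulVec, Matrix.one_mulVec, sub_eq_zero, hv]

lemma spec_transpose {ι : Type*} [Fintype ι] [DecidableEq ι] (M : Matrix ι ι ℂ) (z : ℂ) :
    z ∈ spectrum ℂ Mᵀ ↔ z ∈ spectrum ℂ M := by
  rw [spectrum.mem_iff, spectrum.mem_iff, Algebra.algebraMap_eq_smul_one,
    Matrix.isUnit_iff_isUnit_det, Matrix.isUnit_iff_isUnit_det,
    show z • (1 : Matrix ι ι ℂ) - Mᵀ = (z • (1 : Matrix ι ι ℂ) - M)ᵀ by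
      rw [Matrix.transpose_sub, Matrix.transpose_smul, Matrix.transpose_one],
    Matrix.det_transpose]

end ZDaux
/-- For composite `n ≥ 4`, the zero divisor graph `Γ(ZMod n)` is Laplacian integral iff
all eigenvalues of the vertex weighted Laplacian matrix `L(Υ_n)` are integers. -/
theorem zdGraph_laplacian_integral_iff (n : ℕ) [NeZero n] (hn : 4 ≤ n)
    (hcomp : ¬ n.Prime) :
    (∀ z ∈ spectrum ℂ (((zdGraph n).lapMatrix ℝ).map Complex.ofReal), ∃ a : ℤ, z = a) ↔
    (∀ z ∈ spectrum ℂ ((wLap n).map Complex.ofReal), ∃ a : ℤ, z = a) := by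
  classical
  constructor
  · intro h z hz
    rw [ZDaux.spec_iff] at hz
    obtain ⟨v, hv0, hv⟩ := hz
    refine h z ?_
    rw [ZDaux.spec_iff, ZDaux.map_lap]
    refine ⟨fun y => v (ZDaux.fdiv n y), ?_, ?_⟩
    · obtain ⟨d, hd⟩ := Function.ne_iff.mp hv0
      simp only [Pi.zero_apply] at hd
      obtain ⟨hdvd, hd1, hdn⟩ := (ZDaux.mem_properDivs n).mp d.2
      have npos : 0 < n := Nat.pos_of_ne_zero (NeZero.ne n)
      have hpos : 0 < Nat.totient (n / d.1) :=
        Nat.totient_pos.mpr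
          (Nat.div_pos (Nat.le_of_dvd npos hdvd) (lt_trans Nat.zero_lt_one hd1))
      rw [← ZDaux.card_fiber n d] at hpos
      obtain ⟨x, hx⟩ := Finset.card_pos.mp hpos
      have hfx : ZDaux.fdiv n x = d := by simpa using (Finset.mem_filter.mp hx).2
      intro h0
      exact hd (by simpa [hfx] using congrFun h0 x)
    · funext x
      rw [ZDaux.lap_comp n v x, hv]
      simp
  · intro h z hz
    rw [ZDaux.map_lap, ZDaux.spec_iff] at hz
    obtain ⟨u, hu0, hu⟩ := hz
    by_cases hq : ∀ d, ZDaux.Qv n u d = 0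
    · obtain ⟨x, hx⟩ := Function.ne_iff.mp hu0
      simp only [Pi.zero_apply] at hx
      have hdiag := ZDaux.lap_diag n u hq x
      rw [hu, Pi.smul_apply, smul_eq_mul] at hdiag
      have hz' : z = ((zdGraph n).degree x : ℂ)
          + (if n ∣ (ZDaux.fdiv n x).1 * (ZDaux.fdiv n x).1 then (1 : ℂ) else 0) :=
        mul_right_cancel₀ hx hdiag
      by_cases hc : n ∣ (ZDaux.fdiv n x).1 * (ZDaux.fdiv n x).1
      · exact ⟨((zdGraph n).degree x : ℤ) + 1, by rw [hz', if_pos hc]; push_cast; ring⟩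
      · exact ⟨((zdGraph n).degree x : ℤ), by rw [hz', if_neg hc]; push_cast; ring⟩
    · push_neg at hq
      obtain ⟨d0, hd0⟩ := hq
      apply h z
      rw [← ZDaux.spec_transpose, ZDaux.spec_iff]
      refine ⟨fun e => ZDaux.Qv n u e, ?_, ?_⟩
      · intro h0
        exact hd0 (by simpa using congrFun h0 d0)
      · funext d
        rw [← ZDaux.Q_lap n u d, hu, ZDaux.Qv_smul]
        simp
end

section
/- If p is a prime and t ≥ 2 is an integer, then the zero divisor graph Γ(Z_{p^t}) is Laplacian integral, i.e., every eigenvalue of its Laplacian matrix is an integer. -/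
open scoped BigOperators

open Finset Polynomial Matrix

namespace ZdLap

variable {p t : ℕ}

noncomputable def mr (p t c : ℕ) : ℝ := (p:ℝ)^(t-c) - (p:ℝ)^(t-c-1)

noncomputable def ulo (t s : ℕ) : ℕ := if 2*s < t then s+1 else t-s
noncomputable def uhi (t s : ℕ) : ℕ := if 2*s < t then t-s-1 else s-1
noncomputable def ualp (p t s : ℕ) : ℝ :=
  if 2*s < t then (p:ℝ)^s - (p:ℝ)^(t-s-1) else (p:ℝ)^(t-s) - (p:ℝ)^s
noncomputable def ubet (p t s : ℕ) : ℝ := (p:ℝ)^(t-s) - (p:ℝ)^(t-s-1)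

noncomputable def uvec (p t s c : ℕ) : ℝ :=
  if c = s then ualp p t s else if ulo t s ≤ c ∧ c ≤ uhi t s then ubet p t s else 0

lemma tele (ht : 2 ≤ t) :
    ∀ B A : ℕ, 1 ≤ A → A ≤ B + 1 → B ≤ t - 1 →
      ∑ c ∈ Icc A B, mr p t c = (p:ℝ)^(t-A) - (p:ℝ)^(t-B-1) := by
  intro B
  induction B with
  | zero =>
    intro A h1 h2 _
    have : A = 1 := by omega
    subst this
    simp [mr]
  | succ B ih =>
    intro A h1 h2 hB
    rcases eq_or_lt_of_le h2 with h | h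
    · rw [h, Finset.Icc_eq_empty (by omega), Finset.sum_empty]
      have e : t - (B+2) = t - (B+1) - 1 := by omega
      rw [e, sub_self]
    · have h' : A ≤ B + 1 := by omega
      rw [Finset.sum_Icc_succ_top h', ih A h1 h' (by omega)]
      have e1 : t - (B+1) = t - B - 1 := by omega
      have e2 : t - (B+1) - 1 = t - B - 2 := by omega
      simp only [mr, e1, e2]
      ring

lemma not_mem_band (ht : 2 ≤ t) (s : ℕ) : ¬ (ulo t s ≤ s ∧ s ≤ uhi t s) := by
  unfold ulo uhi
  split_ifs with h <;> omega

lemma sum_split (ht : 2 ≤ t) {A s : ℕ} :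
    ∑ c ∈ Icc A (t-1), mr p t c * uvec p t s c
      = (if A ≤ s ∧ s ≤ t-1 then mr p t s * ualp p t s else 0)
        + (∑ c ∈ Icc (max A (ulo t s)) (min (uhi t s) (t-1)), mr p t c) * ubet p t s := by
  have key : ∀ c, mr p t c * uvec p t s c
      = (if c = s then mr p t c * ualp p t s else 0)
        + (if ulo t s ≤ c ∧ c ≤ uhi t s then mr p t c * ubet p t s else 0) := by
    intro c
    by_cases h1 : c = s
    · rw [h1]
      simp [uvec, not_mem_band ht s]
    · simp only [uvec, if_neg h1, mul_ite, mul_zero, zero_add]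
  rw [Finset.sum_congr rfl (fun c _ => key c), Finset.sum_add_distrib]
  congr 1
  · rw [Finset.sum_ite_eq' (Icc A (t-1)) s (fun c => mr p t c * ualp p t s)]
    simp only [Finset.mem_Icc]
  · rw [← Finset.sum_filter]
    have : (Icc A (t-1)).filter (fun c => ulo t s ≤ c ∧ c ≤ uhi t s)
        = Icc (max A (ulo t s)) (min (uhi t s) (t-1)) := by
      ext c
      simp only [Finset.mem_filter, Finset.mem_Icc]
      omega
    rw [this, Finset.sum_mul]

lemma sum_ite_tail (ht : 2 ≤ t) {a : ℕ} (ha1 : 1 ≤ a) (ha2 : a ≤ t-1) (F : ℕ → ℝ) :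
    ∑ c ∈ Icc 1 (t-1), (if t ≤ a + c then F c else 0) = ∑ c ∈ Icc (t-a) (t-1), F c := by
  rw [← Finset.sum_filter]
  congr 1
  ext c
  simp only [Finset.mem_filter, Finset.mem_Icc]
  omega

lemma row (ht : 2 ≤ t) {s a : ℕ} (hs1 : s ≤ t-1) (hs2 : 2*s ≤ t-2 ∨ t+1 ≤ 2*s)
    (ha1 : 1 ≤ a) (ha2 : a ≤ t-1) :
    ∑ c ∈ Icc 1 (t-1), mr p t c * (if t ≤ a + c then uvec p t s a - uvec p t s c else 0)
      = ((p:ℝ)^s - 1) * uvec p t s a := by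
  have step1 : ∀ c ∈ Icc 1 (t-1),
      mr p t c * (if t ≤ a + c then uvec p t s a - uvec p t s c else 0)
        = (if t ≤ a + c then mr p t c * uvec p t s a - mr p t c * uvec p t s c else 0) := by
    intro c _
    by_cases h : t ≤ a + c <;> simp [h, mul_sub]
  rw [Finset.sum_congr rfl step1, sum_ite_tail ht ha1 ha2, Finset.sum_sub_distrib,
    ← Finset.sum_mul, tele ht (t-1) (t-a) (by omega) (by omega) (by omega), sum_split ht]
  have ea : t - (t-a) = a := by omega
  have e0 : t - (t-1) - 1 = 0 := by omega
  rw [ea, e0, pow_zero]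
  rcases hs2 with hc | hj
  · -- comp family
    have hlo : ulo t s = s+1 := if_pos (by omega)
    have hhi : uhi t s = t-s-1 := if_pos (by omega)
    have halp : ualp p t s = (p:ℝ)^s - (p:ℝ)^(t-s-1) := if_pos (by omega)
    rw [hlo, hhi, halp]
    have hmin : min (t-s-1) (t-1) = t-s-1 := by omega
    rw [hmin]
    rcases (show a < s ∨ a = s ∨ (s+1 ≤ a ∧ a ≤ t-s-1) ∨ t-s ≤ a by omega) with h | h | h | h
    · have hu : uvec p t s a = 0 := by
        simp only [uvec, hlo, hhi, if_neg (by omega : ¬ a = s)]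
        rw [if_neg (by omega)]
      have hmax : max (t-a) (s+1) = t-a := by omega
      rw [hu, if_neg (by omega : ¬ (t - a ≤ s ∧ s ≤ t-1)), hmax,
        Finset.Icc_eq_empty (by omega : ¬ (t-a ≤ t-s-1)), Finset.sum_empty]
      ring
    · rw [h]
      have hu : uvec p t s s = (p:ℝ)^s - (p:ℝ)^(t-s-1) := by
        simp [uvec, halp]
      have hmax : max (t-s) (s+1) = t-s := by omega
      rw [hu, if_neg (by omega : ¬ (t - s ≤ s ∧ s ≤ t-1)), hmax,
        Finset.Icc_eq_empty (by omega : ¬ (t-s ≤ t-s-1)), Finset.sum_empty]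
      ring
    · have hu : uvec p t s a = ubet p t s := by
        simp only [uvec, hlo, hhi, if_neg (by omega : ¬ a = s)]
        rw [if_pos (by omega : s+1 ≤ a ∧ a ≤ t-s-1)]
      have hmax : max (t-a) (s+1) = t-a := by omega
      rw [hu, if_neg (by omega : ¬ (t - a ≤ s ∧ s ≤ t-1)), hmax,
        tele ht (t-s-1) (t-a) (by omega) (by omega) (by omega), ea]
      have e3 : t - (t-s-1) - 1 = s := by omega
      rw [e3]
      simp only [ubet]
      ring
    · have hu : uvec p t s a = 0 := by
        simp only [uvec, hlo, hhi, if_neg (by omega : ¬ a = s)]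
        rw [if_neg (by omega)]
      have hmax : max (t-a) (s+1) = s+1 := by omega
      rw [hu, if_pos (by omega : t - a ≤ s ∧ s ≤ t-1), hmax,
        tele ht (t-s-1) (s+1) (by omega) (by omega) (by omega)]
      have e4 : t - (s+1) = t-s-1 := by omega
      have e3 : t - (t-s-1) - 1 = s := by omega
      rw [e3, e4]
      simp only [mr, ubet]
      ring
  · -- join family
    have hlo : ulo t s = t-s := if_neg (by omega)
    have hhi : uhi t s = s-1 := if_neg (by omega)
    have halp : ualp p t s = (p:ℝ)^(t-s) - (p:ℝ)^s := if_neg (by omega)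
    rw [hlo, hhi, halp]
    have hmin : min (s-1) (t-1) = s-1 := by omega
    rw [hmin]
    rcases (show a ≤ t-s-1 ∨ a = t-s ∨ (t-s+1 ≤ a ∧ a ≤ s-1) ∨ a = s ∨ s+1 ≤ a by omega)
      with h | h | h | h | h
    · have hu : uvec p t s a = 0 := by
        simp only [uvec, hlo, hhi, if_neg (by omega : ¬ a = s)]
        rw [if_neg (by omega)]
      have hmax : max (t-a) (t-s) = t-a := by omega
      rw [hu, if_neg (by omega : ¬ (t - a ≤ s ∧ s ≤ t-1)), hmax,
        Finset.Icc_eq_empty (by omega : ¬ (t-a ≤ s-1)), Finset.sum_empty]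
      ring
    · rw [h]
      have e5 : t - (t-s) = s := by omega
      have hu : uvec p t s (t-s) = ubet p t s := by
        simp only [uvec, hlo, hhi, if_neg (by omega : ¬ t-s = s)]
        rw [if_pos (by omega : t-s ≤ t-s ∧ t-s ≤ s-1)]
      rw [e5, hu, if_pos (by omega : s ≤ s ∧ s ≤ t-1),
        (by omega : max s (t-s) = s),
        Finset.Icc_eq_empty (by omega : ¬ (s ≤ s-1)), Finset.sum_empty]
      simp only [mr, ubet]
      ring
    · have hu : uvec p t s a = ubet p t s := by
        simp only [uvec, hlo, hhi, if_neg (by omega : ¬ a = s)]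
        rw [if_pos (by omega : t-s ≤ a ∧ a ≤ s-1)]
      have hmax : max (t-a) (t-s) = t-a := by omega
      rw [hu, if_pos (by omega : t - a ≤ s ∧ s ≤ t-1), hmax,
        tele ht (s-1) (t-a) (by omega) (by omega) (by omega), ea]
      have e6 : t - (s-1) - 1 = t-s := by omega
      rw [e6]
      simp only [mr, ubet]
      ring
    · rw [h]
      have e5 : t - (t-s) = s := by omega
      have hu : uvec p t s s = (p:ℝ)^(t-s) - (p:ℝ)^s := by
        simp [uvec, halp]
      rw [hu, if_pos (by omega : t - s ≤ s ∧ s ≤ t-1),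
        (by omega : max (t-s) (t-s) = t-s),
        tele ht (s-1) (t-s) (by omega) (by omega) (by omega), e5]
      have e6 : t - (s-1) - 1 = t-s := by omega
      rw [e6]
      simp only [mr, ubet]
      ring
    · have hu : uvec p t s a = 0 := by
        simp only [uvec, hlo, hhi, if_neg (by omega : ¬ a = s)]
        rw [if_neg (by omega)]
      have hmax : max (t-a) (t-s) = t-s := by omega
      have e5 : t - (t-s) = s := by omega
      have e6 : t - (s-1) - 1 = t-s := by omega
      rw [hu, if_pos (by omega : t - a ≤ s ∧ s ≤ t-1), hmax,
        tele ht (s-1) (t-s) (by omega) (by omega) (by omega), e5, e6]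
      simp only [mr, ubet]
      ring


variable {n : ℕ}


def evx (p : ℕ) {n : ℕ} (x : ZdVert n) : ℕ := (Nat.factorization (x : ZMod n).val) p

section counting

variable [NeZero n]

lemma zmod_mul_eq_zero_iff (x y : ZMod n) : x * y = 0 ↔ n ∣ x.val * y.val := by
  rw [← ZMod.val_eq_zero, ZMod.val_mul]
  exact Nat.dvd_iff_mod_eq_zero.symm

lemma vert_val_ne_zero (x : ZdVert n) : (x : ZMod n).val ≠ 0 := by
  simpa [Ne, ZMod.val_eq_zero] using x.2.1

lemma vert_p_dvd (hp : p.Prime) (hn : n = p ^ t) (x : ZdVert n) : p ∣ (x : ZMod n).val := by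
  subst hn
  by_contra hnd
  obtain ⟨y, hy0, hxy⟩ := x.2.2
  rw [zmod_mul_eq_zero_iff] at hxy
  have hcop : (Nat.Coprime (p ^ t) ((x : ZMod (p^t)).val)) :=
    Nat.Coprime.pow_left t (hp.coprime_iff_not_dvd.mpr hnd)
  have hdvd : p ^ t ∣ y.val := hcop.dvd_of_dvd_mul_left hxy
  have hy : y.val = 0 := Nat.eq_zero_of_dvd_of_lt hdvd (ZMod.val_lt y)
  exact hy0 (by rwa [ZMod.val_eq_zero] at hy)

lemma pow_dvd_iff_le_evx (hp : p.Prime) (x : ZdVert n) (k : ℕ) :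
    p ^ k ∣ (x : ZMod n).val ↔ k ≤ evx p x :=
  Nat.Prime.pow_dvd_iff_le_factorization hp (vert_val_ne_zero x)

lemma one_le_evx (hp : p.Prime) (hn : n = p ^ t) (x : ZdVert n) : 1 ≤ evx p x := by
  rw [← pow_dvd_iff_le_evx hp, pow_one]
  exact vert_p_dvd hp hn x

lemma evx_le (hp : p.Prime) (hn : n = p ^ t) (x : ZdVert n) : evx p x ≤ t - 1 := by
  subst hn
  by_contra hlt
  have h : p ^ t ∣ (x : ZMod (p^t)).val := by
    rw [pow_dvd_iff_le_evx hp]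
    have := one_le_evx hp rfl x
    omega
  exact absurd (Nat.le_of_dvd (Nat.pos_of_ne_zero (vert_val_ne_zero x)) h)
    (Nat.not_le.mpr (ZMod.val_lt _))

lemma vert_mul_eq_zero_iff (hp : p.Prime) (hn : n = p ^ t) (x y : ZdVert n) :
    (x : ZMod n) * (y : ZMod n) = 0 ↔ t ≤ evx p x + evx p y := by
  subst hn
  rw [zmod_mul_eq_zero_iff,
    Nat.Prime.pow_dvd_iff_le_factorization hp
      (Nat.mul_ne_zero (vert_val_ne_zero x) (vert_val_ne_zero y)),
    Nat.factorization_mul (vert_val_ne_zero x) (vert_val_ne_zero y)]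
  rfl

lemma card_dvd_zmod (hp : p.Prime) (hn : n = p ^ t) (k : ℕ) (hk : k ≤ t) :
    ((univ : Finset (ZMod n)).filter (fun b => p ^ k ∣ b.val)).card = p ^ (t - k) := by
  subst hn
  have hpk : 0 < p ^ k := pow_pos hp.pos k
  have hmul : p ^ (t-k) * p ^ k = p ^ t := by
    rw [← pow_add]
    congr 1
    omega
  rw [← Finset.card_range (p ^ (t-k))]
  apply Finset.card_bij' (i := fun b _ => b.val / p ^ k)
    (j := fun a _ => ((a * p ^ k : ℕ) : ZMod (p^t)))
  · intro b hb
    rw [Finset.mem_range, Nat.div_lt_iff_lt_mul hpk, hmul]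
    exact ZMod.val_lt b
  · intro a ha
    rw [Finset.mem_range] at ha
    have hlt : a * p ^ k < p ^ t := by
      calc a * p ^ k < p ^ (t-k) * p ^ k := by
              exact (Nat.mul_lt_mul_right hpk).mpr ha
        _ = p ^ t := hmul
    rw [Finset.mem_filter]
    exact ⟨Finset.mem_univ _, by rw [ZMod.val_cast_of_lt hlt]; exact dvd_mul_left _ _⟩
  · intro b hb
    rw [Finset.mem_filter] at hb
    rw [Nat.div_mul_cancel hb.2]
    exact ZMod.natCast_rightInverse b
  · intro a ha
    rw [Finset.mem_range] at ha
    have hlt : a * p ^ k < p ^ t := by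
      calc a * p ^ k < p ^ (t-k) * p ^ k := (Nat.mul_lt_mul_right hpk).mpr ha
        _ = p ^ t := hmul
    rw [ZMod.val_cast_of_lt hlt, Nat.mul_div_cancel a hpk]


end counting

section graph

variable [NeZero n]

lemma mk_vert (hp : p.Prime) (ht : 2 ≤ t) (b : ZMod (p^t)) (hb : b ≠ 0) (hdvd : p ∣ b.val) :
    b ≠ 0 ∧ ∃ y : ZMod (p^t), y ≠ 0 ∧ b * y = 0 := by
  haveI : NeZero (p ^ t) := ⟨pow_ne_zero t hp.pos.ne'⟩
  have hplt : p ^ (t-1) < p ^ t := Nat.pow_lt_pow_right hp.one_lt (by omega)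
  refine ⟨hb, ((p^(t-1) : ℕ) : ZMod (p^t)), ?_, ?_⟩
  · intro h0
    rw [← ZMod.val_eq_zero, ZMod.val_cast_of_lt hplt] at h0
    exact absurd h0 (pow_pos hp.pos (t-1)).ne'
  · rw [zmod_mul_eq_zero_iff, ZMod.val_cast_of_lt hplt]
    obtain ⟨m, hm⟩ := hdvd
    rw [hm]
    refine ⟨m, ?_⟩
    rw [show p ^ t = p ^ (t-1) * p by rw [← pow_succ]; congr 1; omega]
    ring

lemma card_evx_ge (hp : p.Prime) (hn : n = p ^ t) (ht : 2 ≤ t) (k : ℕ)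
    (hk1 : 1 ≤ k) (hk2 : k ≤ t) :
    ((univ : Finset (ZdVert n)).filter (fun y => k ≤ evx p y)).card = p ^ (t-k) - 1 := by
  subst hn
  classical
  have h0mem : (0 : ZMod (p^t)) ∈ (univ : Finset (ZMod (p^t))).filter
      (fun b => p ^ k ∣ b.val) := by
    simp [Finset.mem_filter]
  have key : ((univ : Finset (ZdVert (p^t))).filter (fun y => k ≤ evx p y)).card
      = (((univ : Finset (ZMod (p^t))).filter (fun b => p ^ k ∣ b.val)).erase 0).card := by
    apply Finset.card_bij (i := fun (y : ZdVert (p^t)) _ => (y : ZMod (p^t)))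
    · intro y hy
      rw [Finset.mem_filter] at hy
      rw [Finset.mem_erase]
      exact ⟨y.2.1, Finset.mem_filter.mpr
        ⟨Finset.mem_univ _, (pow_dvd_iff_le_evx hp y k).mpr hy.2⟩⟩
    · intro y _ y' _ h
      exact Subtype.ext h
    · intro b hb
      rw [Finset.mem_erase, Finset.mem_filter] at hb
      have hpb : p ∣ b.val := dvd_trans (dvd_pow_self p (by omega : k ≠ 0)) hb.2.2
      refine ⟨⟨b, mk_vert hp ht b hb.1 hpb⟩, ?_, rfl⟩
      rw [Finset.mem_filter]
      exact ⟨Finset.mem_univ _, (pow_dvd_iff_le_evx hp _ k).mp hb.2.2⟩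
  rw [key, Finset.card_erase_of_mem h0mem, card_dvd_zmod hp rfl k hk2]

lemma card_evx_eq (hp : p.Prime) (hn : n = p ^ t) (ht : 2 ≤ t) (c : ℕ)
    (hc1 : 1 ≤ c) (hc2 : c ≤ t-1) :
    ((univ : Finset (ZdVert n)).filter (fun y => evx p y = c)).card
      = p ^ (t-c) - p ^ (t-c-1) := by
  have hsplit : (univ : Finset (ZdVert n)).filter (fun y => evx p y = c)
      = ((univ : Finset (ZdVert n)).filter (fun y => c ≤ evx p y))
        \ ((univ : Finset (ZdVert n)).filter (fun y => c+1 ≤ evx p y)) := by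
    ext y
    simp only [Finset.mem_filter, Finset.mem_sdiff, Finset.mem_univ, true_and]
    omega
  have hsub : ((univ : Finset (ZdVert n)).filter (fun y => c+1 ≤ evx p y))
      ⊆ ((univ : Finset (ZdVert n)).filter (fun y => c ≤ evx p y)) := by
    intro y
    simp only [Finset.mem_filter, Finset.mem_univ, true_and]
    omega
  rw [hsplit, Finset.card_sdiff_of_subset hsub, card_evx_ge hp hn ht c hc1 (by omega),
    card_evx_ge hp hn ht (c+1) (by omega) (by omega)]
  have e : t - (c+1) = t - c - 1 := by omega
  rw [e]
  have h1 : 1 ≤ p ^ (t-c-1) := Nat.one_le_pow _ _ hp.pos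
  have h2 : p ^ (t-c-1) ≤ p ^ (t-c) := Nat.pow_le_pow_right hp.one_lt.le (by omega)
  omega

lemma sum_fiber (hp : p.Prime) (hn : n = p ^ t) (ht : 2 ≤ t) (h : ℕ → ℝ) :
    ∑ y : ZdVert n, h (evx p y) = ∑ c ∈ Icc 1 (t-1), mr p t c * h c := by
  rw [← Finset.sum_fiberwise_of_maps_to
    (g := evx p) (t := Icc 1 (t-1))
    (fun x _ => Finset.mem_Icc.mpr ⟨one_le_evx hp hn x, evx_le hp hn x⟩)
    (fun y => h (evx p y))]
  refine Finset.sum_congr rfl (fun c hc => ?_)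
  rw [Finset.sum_congr rfl (fun y hy => by rw [(Finset.mem_filter.mp hy).2]),
    Finset.sum_const, nsmul_eq_mul]
  rw [Finset.mem_Icc] at hc
  rw [card_evx_eq hp hn ht c hc.1 hc.2]
  have h2 : p ^ (t-c-1) ≤ p ^ (t-c) := Nat.pow_le_pow_right hp.one_lt.le (by omega)
  rw [Nat.cast_sub h2, Nat.cast_pow, Nat.cast_pow]
  rfl

lemma lap_mulVec (hp : p.Prime) (hn : n = p ^ t) (v : ZdVert n → ℝ) (x : ZdVert n) :
    ((zdGraph n).lapMatrix ℝ *ᵥ v) x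
      = ∑ y : ZdVert n, (if t ≤ evx p x + evx p y then v x - v y else 0) := by
  rw [SimpleGraph.lapMatrix_mulVec_apply]
  have hdeg : ((zdGraph n).degree x : ℝ) * v x
      = ∑ _y ∈ (zdGraph n).neighborFinset x, v x := by
    rw [Finset.sum_const, ← SimpleGraph.card_neighborFinset_eq_degree, nsmul_eq_mul]
  rw [hdeg, ← Finset.sum_sub_distrib]
  have hnbr : (zdGraph n).neighborFinset x = univ.filter (fun y => (zdGraph n).Adj x y) := by
    ext y
    simp [SimpleGraph.mem_neighborFinset]
  rw [hnbr, Finset.sum_filter]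
  refine Finset.sum_congr rfl (fun y _ => ?_)
  by_cases hxy : x = y
  · subst hxy
    simp [SimpleGraph.irrefl]
  · have hiff : (zdGraph n).Adj x y ↔ (t ≤ evx p x + evx p y) := by
      rw [show (zdGraph n).Adj x y ↔ (x ≠ y ∧ (x : ZMod n) * (y : ZMod n) = 0) from Iff.rfl,
        vert_mul_eq_zero_iff hp hn, and_iff_right hxy]
    rw [if_congr hiff rfl rfl]

lemma lap_uvec (hp : p.Prime) (hn : n = p ^ t) (ht : 2 ≤ t) {s : ℕ}
    (hs1 : s ≤ t-1) (hs2 : 2*s ≤ t-2 ∨ t+1 ≤ 2*s) :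
    (zdGraph n).lapMatrix ℝ *ᵥ (fun x => uvec p t s (evx p x))
      = ((p:ℝ)^s - 1) • (fun x => uvec p t s (evx p x)) := by
  funext x
  rw [lap_mulVec hp hn]
  have := sum_fiber hp hn ht
    (fun c => if t ≤ evx p x + c then uvec p t s (evx p x) - uvec p t s c else 0)
  rw [this, row ht hs1 hs2 (one_le_evx hp hn x) (evx_le hp hn x)]
  simp

lemma lap_meanzero (hp : p.Prime) (hn : n = p ^ t) (ht : 2 ≤ t) (c : ℕ)
    (hc1 : 1 ≤ c) (hc2 : c ≤ t-1) (z : ZdVert n → ℝ)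
    (hz : ∀ x, evx p x ≠ c → z x = 0) (hsum : ∑ x : ZdVert n, z x = 0) :
    (zdGraph n).lapMatrix ℝ *ᵥ z = ((p:ℝ)^c - 1) • z := by
  funext x
  rw [lap_mulVec hp hn]
  have split : ∀ y : ZdVert n, (if t ≤ evx p x + evx p y then z x - z y else 0)
      = (if t ≤ evx p x + evx p y then z x else 0)
        - (if t ≤ evx p x + c then z y else 0) := by
    intro y
    by_cases hy : evx p y = c
    · rw [hy]
      by_cases hcond : t ≤ evx p x + c <;> simp [hcond]
    · rw [hz y hy]
      by_cases h1 : t ≤ evx p x + evx p y <;> by_cases h2 : t ≤ evx p x + c <;>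
        simp [h1, h2]
  rw [Finset.sum_congr rfl (fun y _ => split y), Finset.sum_sub_distrib]
  have h2nd : ∑ y : ZdVert n, (if t ≤ evx p x + c then z y else 0) = 0 := by
    by_cases hcond : t ≤ evx p x + c
    · simp only [if_pos hcond]
      exact hsum
    · simp [hcond]
  rw [h2nd, sub_zero]
  have h1st : ∑ y : ZdVert n, (if t ≤ evx p x + evx p y then z x else 0)
      = z x * ((p:ℝ)^(evx p x) - 1) := by
    have hpt : ∀ y : ZdVert n, (if t ≤ evx p x + evx p y then z x else 0)
        = z x * (if t ≤ evx p x + evx p y then (1:ℝ) else 0) := by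
      intro y
      split <;> simp
    rw [Finset.sum_congr rfl (fun y _ => hpt y), ← Finset.mul_sum]
    congr 1
    rw [sum_fiber hp hn ht (fun c' => if t ≤ evx p x + c' then (1:ℝ) else 0)]
    have conv : ∀ c' ∈ Icc 1 (t-1),
        mr p t c' * (if t ≤ evx p x + c' then (1:ℝ) else 0)
          = (if t ≤ evx p x + c' then mr p t c' else 0) := by
      intro c' _
      split <;> simp
    rw [Finset.sum_congr rfl conv,
      sum_ite_tail ht (one_le_evx hp hn x) (evx_le hp hn x),
      tele ht (t-1) (t - evx p x) (by have := evx_le hp hn x; omega) (by omega) (by omega)]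
    have e1 : t - (t - evx p x) = evx p x := by
      have h1 := one_le_evx hp hn x
      have h2 := evx_le hp hn x
      omega
    have e0 : t - (t-1) - 1 = 0 := by omega
    rw [e1, e0, pow_zero]
  rw [h1st]
  by_cases hzx : z x = 0
  · simp [hzx]
  · have hex : evx p x = c := by
      by_contra hne
      exact hzx (hz x hne)
    rw [hex]
    simp only [Pi.smul_apply, smul_eq_mul]
    ring

end graph
section quotient

lemma sum_range_icc (m : ℕ) (F : ℕ → ℝ) :
    ∑ j ∈ Finset.range m, F (j+1) = ∑ c ∈ Icc 1 m, F c := by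
  induction m with
  | zero => simp
  | succ m ih => rw [Finset.sum_range_succ, ih, Finset.sum_Icc_succ_top (by omega)]

lemma fin_sum_icc (m : ℕ) (F : ℕ → ℝ) :
    ∑ j : Fin m, F (j.1+1) = ∑ c ∈ Icc 1 m, F c := by
  rw [Fin.sum_univ_eq_sum_range (fun j => F (j+1)) m]
  exact sum_range_icc m F

noncomputable def rt (p t s : ℕ) : Fin (t-1) → ℝ := fun i => uvec p t s (i.1+1)

noncomputable def Bhat (p t : ℕ) : (Fin (t-1) → ℝ) →ₗ[ℝ] (Fin (t-1) → ℝ) where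
  toFun g i := ∑ j : Fin (t-1), mr p t (j.1+1)
    * (if t ≤ (i.1+1) + (j.1+1) then g i - g j else 0)
  map_add' g h := by
    funext i
    simp only [Pi.add_apply]
    rw [← Finset.sum_add_distrib]
    refine Finset.sum_congr rfl (fun j _ => ?_)
    by_cases hc : t ≤ (i.1+1) + (j.1+1) <;> simp [hc] <;> ring
  map_smul' r g := by
    funext i
    simp only [RingHom.id_apply, Pi.smul_apply, smul_eq_mul]
    rw [Finset.mul_sum]
    refine Finset.sum_congr rfl (fun j _ => ?_)
    by_cases hc : t ≤ (i.1+1) + (j.1+1) <;> simp [hc] <;> ring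

lemma Bhat_eigen (ht : 2 ≤ t) {s : ℕ} (hs1 : s ≤ t-1) (hs2 : 2*s ≤ t-2 ∨ t+1 ≤ 2*s) :
    Bhat p t (rt p t s) = ((p:ℝ)^s - 1) • rt p t s := by
  funext i
  have hi := i.isLt
  show ∑ j : Fin (t-1), mr p t (j.1+1)
      * (if t ≤ (i.1+1) + (j.1+1) then rt p t s i - rt p t s j else 0)
    = (((p:ℝ)^s - 1) • rt p t s) i
  simp only [rt, Pi.smul_apply, smul_eq_mul]
  rw [fin_sum_icc (t-1) (fun c => mr p t c
    * (if t ≤ (i.1+1) + c then uvec p t s (i.1+1) - uvec p t s c else 0))]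
  exact row ht hs1 hs2 (by omega) (by omega)

lemma rt_ne (hp2 : 2 ≤ p) (ht : 2 ≤ t) {s : ℕ} (hs1 : s ≤ t-1)
    (hs2 : 2*s ≤ t-2 ∨ t+1 ≤ 2*s) : rt p t s ≠ 0 := by
  have hpR : (1:ℝ) < (p:ℕ) := by exact_mod_cast hp2
  rcases Nat.eq_zero_or_pos s with hs0 | hs0
  · subst hs0
    intro hcontra
    have h0 : rt p t 0 ⟨0, by omega⟩ = 0 := by rw [hcontra]; rfl
    rw [rt] at h0
    simp only [uvec] at h0
    have hlo0 : ulo t 0 = 1 := by rw [ulo, if_pos (show 2*0 < t by omega)]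
    have hhi0 : uhi t 0 = t-1 := by rw [uhi, if_pos (show 2*0 < t by omega)]; omega
    rw [if_neg (show ¬ (0+1 : ℕ) = 0 by omega),
      if_pos (show ulo t 0 ≤ 0+1 ∧ 0+1 ≤ uhi t 0 by rw [hlo0, hhi0]; omega)] at h0
    have hlt : (p:ℝ)^(t-0-1) < (p:ℝ)^(t-0) := pow_lt_pow_right₀ hpR (by omega)
    rw [ubet] at h0
    linarith
  · intro hcontra
    have h0 : rt p t s ⟨s-1, by omega⟩ = 0 := by rw [hcontra]; rfl
    rw [rt] at h0
    simp only at h0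
    rw [show s-1+1 = s by omega] at h0
    simp only [uvec, if_true] at h0
    rcases hs2 with hc | hj
    · rw [ualp, if_pos (show 2*s < t by omega)] at h0
      have hlt : (p:ℝ)^s < (p:ℝ)^(t-s-1) := pow_lt_pow_right₀ hpR (by omega)
      linarith
    · rw [ualp, if_neg (show ¬ 2*s < t by omega)] at h0
      have hlt : (p:ℝ)^(t-s) < (p:ℝ)^s := pow_lt_pow_right₀ hpR (by omega)
      linarith

end quotient

section assemble

variable [NeZero n]

noncomputable def psiMap (hp : p.Prime) (hn : n = p^t) (ht : 2 ≤ t) :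
    (Fin (t-1) → ℝ) →ₗ[ℝ] (ZdVert n → ℝ) where
  toFun g x := g ⟨evx p x - 1, by
    have h1 := one_le_evx hp hn x
    have h2 := evx_le hp hn x
    omega⟩
  map_add' _ _ := rfl
  map_smul' _ _ := rfl

lemma psiMap_rt (hp : p.Prime) (hn : n = p^t) (ht : 2 ≤ t) (s : ℕ) :
    psiMap hp hn ht (rt p t s) = fun x => uvec p t s (evx p x) := by
  funext x
  show uvec p t s ((evx p x - 1)+1) = _
  have h : evx p x - 1 + 1 = evx p x := by
    have := one_le_evx hp hn x
    omega
  rw [h]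

lemma aeval_kill {M : Type*} [AddCommGroup M] [Module ℝ M] (T : Module.End ℝ M)
    (Q : ℝ[X]) (μ : ℝ) (hQ : Q.eval μ = 0) (v : M) (hv : T v = μ • v) :
    (Polynomial.aeval T Q) v = 0 := by
  obtain ⟨R, hR⟩ := Polynomial.dvd_iff_isRoot.mpr hQ
  rw [hR, mul_comm, _root_.map_mul, Module.End.mul_apply]
  have hz : (Polynomial.aeval T (X - C μ)) v = 0 := by
    rw [map_sub, Polynomial.aeval_X, Polynomial.aeval_C, LinearMap.sub_apply,
      Module.algebraMap_end_apply, hv, sub_self]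
  rw [hz, map_zero]

lemma aeval_lap (hp : p.Prime) (hn : n = p^t) (ht : 2 ≤ t) :
    Polynomial.aeval ((zdGraph n).lapMatrix ℝ)
      (∏ c ∈ Icc 0 (t-1), (X - C ((p:ℝ)^c - 1))) = 0 := by
  classical
  set Q : ℝ[X] := ∏ c ∈ Icc 0 (t-1), (X - C ((p:ℝ)^c - 1)) with hQdef
  have hroot : ∀ c ∈ Icc 0 (t-1), Q.eval ((p:ℝ)^c - 1) = 0 := by
    intro c hc
    rw [hQdef, Polynomial.eval_prod]
    apply Finset.prod_eq_zero hc
    simp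
  set T : Module.End ℝ (ZdVert n → ℝ)
    := Matrix.toLinAlgEquiv' ((zdGraph n).lapMatrix ℝ) with hTdef
  have hT : ∀ w : ZdVert n → ℝ, T w = (zdGraph n).lapMatrix ℝ *ᵥ w := fun w => rfl
  suffices hsuff : Polynomial.aeval T Q = 0 by
    have haevalT : Polynomial.aeval T Q
        = Matrix.toLinAlgEquiv' (Polynomial.aeval ((zdGraph n).lapMatrix ℝ) Q) :=
      (Polynomial.aeval_algHom_apply (Matrix.toLinAlgEquiv'.toAlgHom) _ Q)
    apply (Matrix.toLinAlgEquiv'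
      : Matrix (ZdVert n) (ZdVert n) ℝ ≃ₐ[ℝ] _).injective
    rw [map_zero, ← haevalT, hsuff]
  apply LinearMap.ext
  intro v
  rw [LinearMap.zero_apply]
  set avgf : ℕ → ℝ := fun c =>
    (∑ y ∈ (univ : Finset (ZdVert n)).filter (fun y => evx p y = c), v y)
      / (((univ : Finset (ZdVert n)).filter (fun y => evx p y = c)).card : ℝ) with havg
  set w : ZdVert n → ℝ := psiMap hp hn ht (fun i => avgf (i.1+1)) with hw
  set zc : ℕ → ZdVert n → ℝ := fun c x => if evx p x = c then v x - avgf c else 0 with hzc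
  have hw' : w = fun x => avgf (evx p x) := by
    rw [hw]
    funext x
    show avgf ((evx p x - 1)+1) = _
    have h : evx p x - 1 + 1 = evx p x := by
      have := one_le_evx hp hn x
      omega
    rw [h]
  have hdecomp : v = (∑ c ∈ Icc 1 (t-1), zc c) + w := by
    funext x
    rw [Pi.add_apply, Finset.sum_apply, hw']
    have hmem : evx p x ∈ Icc 1 (t-1) :=
      Finset.mem_Icc.mpr ⟨one_le_evx hp hn x, evx_le hp hn x⟩
    have hs : ∑ c ∈ Icc 1 (t-1), zc c x = v x - avgf (evx p x) := by
      rw [hzc]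
      simp only
      rw [Finset.sum_ite_eq (Icc 1 (t-1)) (evx p x) (fun c => v x - avgf c), if_pos hmem]
    rw [hs]
    ring
  rw [hdecomp, map_add, map_sum]
  have hzkill : ∀ c ∈ Icc 1 (t-1), (Polynomial.aeval T Q) (zc c) = 0 := by
    intro c hc
    rw [Finset.mem_Icc] at hc
    apply aeval_kill T Q ((p:ℝ)^c - 1)
      (hroot c (by rw [Finset.mem_Icc]; omega))
    rw [hT]
    apply lap_meanzero hp hn ht c hc.1 hc.2
    · intro x hx
      rw [hzc]
      simp only
      rw [if_neg hx]
    · rw [hzc]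
      simp only
      rw [← Finset.sum_filter, Finset.sum_sub_distrib, Finset.sum_const]
      by_cases h0 : ((univ : Finset (ZdVert n)).filter (fun y => evx p y = c)).card = 0
      · rw [Finset.card_eq_zero] at h0
        rw [h0]
        simp
      · rw [havg]
        simp only
        rw [nsmul_eq_mul]
        have hne : (((univ : Finset (ZdVert n)).filter
            (fun y => evx p y = c)).card : ℝ) ≠ 0 := Nat.cast_ne_zero.mpr h0
        field_simp
        ring
  rw [Finset.sum_eq_zero hzkill, zero_add]
  set E : Finset ℕ := (Icc 0 (t-1)).erase (t/2) with hE
  have hIcccard : (Icc 0 (t-1)).card = t := by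
    rw [Nat.card_Icc]
    omega
  have hEcard : E.card = t - 1 := by
    rw [hE, Finset.card_erase_of_mem (by rw [Finset.mem_Icc]; omega), hIcccard]
  have hprops : ∀ s ∈ E, s ≤ t-1 ∧ (2*s ≤ t-2 ∨ t+1 ≤ 2*s) := by
    intro s hs
    rw [hE, Finset.mem_erase, Finset.mem_Icc] at hs
    omega
  have hpR : (1:ℝ) < (p:ℕ) := by exact_mod_cast hp.one_lt
  have hinj : Function.Injective (fun s : E => (p:ℝ)^(s.1 : ℕ) - 1) := by
    intro a b hab
    simp only at hab
    have heq : (p:ℝ)^(a.1:ℕ) = (p:ℝ)^(b.1:ℕ) := by linarith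
    have hsm : StrictMono (fun k : ℕ => (p:ℝ)^k) :=
      fun _ _ h => pow_lt_pow_right₀ hpR h
    exact Subtype.ext (hsm.injective heq)
  have heig : ∀ s : E, Module.End.HasEigenvector (Bhat p t) ((p:ℝ)^(s.1:ℕ) - 1) (rt p t s.1) := by
    intro s
    obtain ⟨h1, h2⟩ := hprops s.1 s.2
    exact ⟨Module.End.mem_eigenspace_iff.mpr (Bhat_eigen ht h1 h2),
      rt_ne hp.two_le ht h1 h2⟩
  have hli := Module.End.eigenvectors_linearIndependent' (Bhat p t)
    (fun s : E => (p:ℝ)^(s.1:ℕ) - 1) hinj _ heig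
  have hcard : Fintype.card E = t - 1 := by rw [Fintype.card_coe, hEcard]
  have hNE : Nonempty (E : Finset ℕ) := by
    rw [← Fintype.card_pos_iff, hcard]
    omega
  have hfr : Module.finrank ℝ (Fin (t-1) → ℝ) = t-1 := by
    rw [Module.finrank_pi]
    exact Fintype.card_fin _
  have hspan : Submodule.span ℝ (Set.range (fun s : E => rt p t s.1)) = ⊤ :=
    hli.span_eq_top_of_card_eq_finrank (by rw [hcard, hfr])
  have hwmem : w ∈ Submodule.span ℝ
      (Set.range (fun s : E => psiMap hp hn ht (rt p t s.1))) := by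
    rw [hw]
    have hgmem : (fun i : Fin (t-1) => avgf (i.1+1))
        ∈ Submodule.span ℝ (Set.range (fun s : E => rt p t s.1)) := by
      rw [hspan]
      trivial
    have hmap := Submodule.mem_map_of_mem (f := (psiMap hp hn ht)) hgmem
    rw [Submodule.map_span, ← Set.range_comp] at hmap
    exact hmap
  have hker : Submodule.span ℝ
      (Set.range (fun s : E => psiMap hp hn ht (rt p t s.1)))
        ≤ LinearMap.ker (Polynomial.aeval T Q) := by
    rw [Submodule.span_le]
    rintro u ⟨s, rfl⟩
    obtain ⟨h1, h2⟩ := hprops s.1 s.2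
    rw [SetLike.mem_coe, LinearMap.mem_ker]
    apply aeval_kill T Q ((p:ℝ)^(s.1:ℕ) - 1)
      (hroot s.1 (by rw [Finset.mem_Icc]; exact ⟨Nat.zero_le _, h1⟩))
    rw [hT]
    show SimpleGraph.lapMatrix ℝ (zdGraph n) *ᵥ (psiMap hp hn ht (rt p t s.1))
      = ((p:ℝ)^(s.1:ℕ) - 1) • (psiMap hp hn ht (rt p t s.1))
    rw [psiMap_rt hp hn ht]
    exact lap_uvec hp hn ht h1 h2
  have := hker hwmem
  rwa [LinearMap.mem_ker] at this

lemma pow_mulVec_eigen {V : Type*} [Fintype V] [DecidableEq V]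
    (M : Matrix V V ℂ) (v : V → ℂ) (z : ℂ) (hv : M *ᵥ v = z • v) :
    ∀ k : ℕ, (M ^ k) *ᵥ v = z ^ k • v := by
  intro k
  induction k with
  | zero => simp [Matrix.one_mulVec]
  | succ k ih =>
    rw [pow_succ, ← Matrix.mulVec_mulVec, hv, Matrix.mulVec_smul, ih, smul_smul,
      pow_succ]
    ring_nf

lemma eval₂_eigen {V : Type*} [Fintype V] [DecidableEq V]
    (M : Matrix V V ℂ) (v : V → ℂ) (z : ℂ) (hv : M *ᵥ v = z • v) (Q : ℝ[X]) :
    (Polynomial.eval₂ ((Complex.ofRealHom.mapMatrix : Matrix V V ℝ →+* Matrix V V ℂ).comp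
        (algebraMap ℝ (Matrix V V ℝ))) M Q) *ᵥ v
      = (Polynomial.eval₂ Complex.ofRealHom z Q) • v := by
  induction Q using Polynomial.induction_on' with
  | add P R hP hR =>
    rw [Polynomial.eval₂_add, Polynomial.eval₂_add, Matrix.add_mulVec, hP, hR, add_smul]
  | monomial k a =>
    rw [Polynomial.eval₂_monomial, Polynomial.eval₂_monomial, ← Matrix.mulVec_mulVec,
      pow_mulVec_eigen M v z hv k]
    have hfa : ((Complex.ofRealHom.mapMatrix : Matrix V V ℝ →+* Matrix V V ℂ).comp
        (algebraMap ℝ (Matrix V V ℝ))) a = ((a:ℝ):ℂ) • (1 : Matrix V V ℂ) := by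
      rw [RingHom.comp_apply, Algebra.algebraMap_eq_smul_one, RingHom.mapMatrix_apply]
      ext i j
      simp only [Matrix.map_apply, Matrix.smul_apply, Matrix.one_apply, smul_eq_mul]
      split_ifs <;> simp
    rw [hfa, Matrix.smul_mulVec, Matrix.one_mulVec, smul_smul]
    simp [Complex.ofRealHom_eq_coe]

end assemble
end ZdLap

/-- For a prime `p` and `t ≥ 2`, the zero divisor graph `Γ(ZMod (p^t))` is Laplacian
integral: every eigenvalue of its Laplacian matrix is an integer. -/
theorem zdGraph_prime_power_laplacian_integral (n p t : ℕ) [NeZero n] (hp : p.Prime)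
    (ht : 2 ≤ t) (hn : n = p ^ t) :
    ∀ z ∈ spectrum ℂ (((zdGraph n).lapMatrix ℝ).map Complex.ofReal), ∃ a : ℤ, z = a := by
  classical
  intro z hz
  rw [spectrum.mem_iff] at hz
  set L := (zdGraph n).lapMatrix ℝ with hL
  set Mc : Matrix (ZdVert n) (ZdVert n) ℂ := L.map Complex.ofReal with hMc
  have hdet : (algebraMap ℂ (Matrix (ZdVert n) (ZdVert n) ℂ) z - Mc).det = 0 := by
    by_contra hne
    exact hz ((Matrix.isUnit_iff_isUnit_det _).mpr (Ne.isUnit hne))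
  obtain ⟨v, hv0, hmv⟩ := (Matrix.exists_mulVec_eq_zero_iff).mpr hdet
  have heig : Mc *ᵥ v = z • v := by
    have h1 : (algebraMap ℂ (Matrix (ZdVert n) (ZdVert n) ℂ) z - Mc) *ᵥ v
        = z • v - Mc *ᵥ v := by
      rw [Matrix.sub_mulVec, Algebra.algebraMap_eq_smul_one, Matrix.smul_mulVec,
        Matrix.one_mulVec]
    rw [h1] at hmv
    exact (sub_eq_zero.mp hmv).symm
  set Q : Polynomial ℝ := ∏ c ∈ Finset.Icc 0 (t-1),
    (Polynomial.X - Polynomial.C ((p:ℝ)^c - 1)) with hQdef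
  have hQL : Polynomial.aeval L Q = 0 := ZdLap.aeval_lap hp hn ht
  have hmapped : Polynomial.eval₂
      ((Complex.ofRealHom.mapMatrix : Matrix (ZdVert n) (ZdVert n) ℝ →+* _).comp
        (algebraMap ℝ (Matrix (ZdVert n) (ZdVert n) ℝ))) Mc Q = 0 := by
    have hcast := congrArg (fun A => (Complex.ofRealHom.mapMatrix
      : Matrix (ZdVert n) (ZdVert n) ℝ →+* Matrix (ZdVert n) (ZdVert n) ℂ) A) hQL
    simp only [map_zero] at hcast
    rw [Polynomial.aeval_def, Polynomial.hom_eval₂] at hcast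
    have hMM : (Complex.ofRealHom.mapMatrix
        : Matrix (ZdVert n) (ZdVert n) ℝ →+* Matrix (ZdVert n) (ZdVert n) ℂ) L = Mc := rfl
    rwa [hMM] at hcast
  have hqz : Polynomial.eval₂ Complex.ofRealHom z Q = 0 := by
    have h0 : (0 : Matrix (ZdVert n) (ZdVert n) ℂ) *ᵥ v
        = Polynomial.eval₂ Complex.ofRealHom z Q • v := by
      rw [← hmapped]
      exact ZdLap.eval₂_eigen Mc v z heig Q
    rw [Matrix.zero_mulVec] at h0
    rcases smul_eq_zero.mp h0.symm with h | h
    · exact h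
    · exact absurd h hv0
  rw [hQdef, Polynomial.eval₂_finset_prod] at hqz
  obtain ⟨c, hcmem, hc0⟩ := Finset.prod_eq_zero_iff.mp hqz
  rw [Polynomial.eval₂_sub, Polynomial.eval₂_X, Polynomial.eval₂_C, sub_eq_zero] at hc0
  refine ⟨(p:ℤ)^c - 1, ?_⟩
  rw [hc0]
  simp only [Complex.ofRealHom_eq_coe, Complex.ofReal_sub, Complex.ofReal_pow,
    Complex.ofReal_natCast, Complex.ofReal_one]
  push_cast
  ring
end

section
/- Let n = p^t for a prime p and an integer t ≥ 2 with n ≠ 4. Then the Laplacian spectral radius of Γ(Z_{p^t}) equals the number of vertices of Γ(Z_{p^t}), namely λ(Γ(Z_{p^t})) = p^{t−1} − 1. -/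
open scoped BigOperators

/-- The multiset of Laplacian eigenvalues (roots of the characteristic polynomial of the
Laplacian matrix, counted with multiplicity) of a finite graph. -/
noncomputable def lapEigs {V : Type*} [Fintype V] [DecidableEq V] (G : SimpleGraph V)
    [DecidableRel G.Adj] : Multiset ℝ :=
  (G.lapMatrix ℝ).charpoly.roots

/-- The algebraic connectivity `μ(G)`: the second smallest Laplacian eigenvalue. -/
noncomputable def algConn {V : Type*} [Fintype V] [DecidableEq V] (G : SimpleGraph V)
    [DecidableRel G.Adj] : ℝ :=
  ((lapEigs G).sort (· ≤ ·)).getD 1 (Fintype.card V)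

/-- The Laplacian spectral radius `λ(G)`: the largest Laplacian eigenvalue. -/
noncomputable def lapRadius {V : Type*} [Fintype V] [DecidableEq V] (G : SimpleGraph V)
    [DecidableRel G.Adj] : ℝ :=
  ((lapEigs G).sort (· ≤ ·)).getD (Fintype.card V - 1) 0

section Spectral

open Polynomial Matrix Finset

variable {V : Type*} [Fintype V] [DecidableEq V]


variable {V : Type*} [Fintype V] [DecidableEq V]

lemma aux_charpoly_diag {R : Type*} [CommRing R] (d : V → R) :
    (Matrix.diagonal d).charpoly = ∏ i, (X - C (d i)) := by
  have h : charmatrix (Matrix.diagonal d) = Matrix.diagonal fun i => X - C (d i) := by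
    ext i j
    by_cases hij : i = j
    · subst hij; simp [charmatrix_apply_eq]
    · rw [charmatrix_apply_ne _ _ _ hij, Matrix.diagonal_apply_ne _ hij,
        Matrix.diagonal_apply_ne _ hij, map_zero, neg_zero]
  rw [Matrix.charpoly, h, Matrix.det_diagonal]

lemma aux_charmatrix_eq {R : Type*} [CommRing R] (M : Matrix V V R) :
    charmatrix M = (X : R[X]) • (1 : Matrix V V R[X]) - M.map C := by
  ext i j
  by_cases h : i = j
  · subst h; rw [charmatrix_apply_eq]; simp [Matrix.one_apply]
  · rw [charmatrix_apply_ne _ _ _ h]; simp [Matrix.one_apply_ne h]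

lemma aux_charpoly_conj {R : Type*} [CommRing R] (U D W : Matrix V V R)
    (h1 : U * W = 1) (h2 : W * U = 1) : (U * D * W).charpoly = D.charpoly := by
  have key : charmatrix (U * D * W) = U.map C * charmatrix D * W.map C := by
    rw [aux_charmatrix_eq, aux_charmatrix_eq, Matrix.mul_sub, Matrix.sub_mul]
    congr 1
    · rw [Matrix.mul_smul, Matrix.mul_one, Matrix.smul_mul, ← Matrix.map_mul, h1,
        Matrix.map_one _ (map_zero C) (map_one C)]
    · rw [← Matrix.map_mul, ← Matrix.map_mul]
  rw [Matrix.charpoly, Matrix.charpoly, key, Matrix.det_mul, Matrix.det_mul, mul_comm,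
    ← mul_assoc, ← Matrix.det_mul, ← Matrix.map_mul, h2,
    Matrix.map_one _ (map_zero C) (map_one C), Matrix.det_one, one_mul]


lemma aux_unitary_pair (A : Matrix V V ℝ) (hA : A.IsHermitian) :
    (hA.eigenvectorUnitary : Matrix V V ℝ) * star (hA.eigenvectorUnitary : Matrix V V ℝ) = 1 ∧
    star (hA.eigenvectorUnitary : Matrix V V ℝ) * (hA.eigenvectorUnitary : Matrix V V ℝ) = 1 := by
  have h := hA.eigenvectorUnitary.2
  rw [Unitary.mem_iff] at h
  exact ⟨h.2, h.1⟩

lemma aux_charpoly_herm (A : Matrix V V ℝ) (hA : A.IsHermitian) :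
    A.charpoly = ∏ i, (X - C (hA.eigenvalues i)) := by
  obtain ⟨h1, h2⟩ := aux_unitary_pair A hA
  calc A.charpoly
      = ((hA.eigenvectorUnitary : Matrix V V ℝ) * diagonal (RCLike.ofReal ∘ hA.eigenvalues)
          * star (hA.eigenvectorUnitary : Matrix V V ℝ)).charpoly := by
        exact congrArg Matrix.charpoly hA.spectral_theorem
    _ = (diagonal (RCLike.ofReal ∘ hA.eigenvalues)).charpoly :=
        aux_charpoly_conj _ _ _ h1 h2
    _ = ∏ i, (X - C (hA.eigenvalues i)) := by
        have hdiag : diagonal (RCLike.ofReal ∘ hA.eigenvalues) = diagonal hA.eigenvalues := by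
          rw [RCLike.ofReal_real_eq_id, Function.id_comp]
        rw [hdiag, aux_charpoly_diag]

lemma aux_roots_herm (A : Matrix V V ℝ) (hA : A.IsHermitian) :
    A.charpoly.roots = Finset.univ.val.map hA.eigenvalues := by
  rw [aux_charpoly_herm A hA, ← Polynomial.roots_multiset_prod_X_sub_C
    (Finset.univ.val.map hA.eigenvalues)]
  congr 1
  rw [Multiset.map_map]
  rfl

lemma aux_det_herm (A : Matrix V V ℝ) (hA : A.IsHermitian) (c : ℝ) :
    (c • (1 : Matrix V V ℝ) - A).det = ∏ i, (c - hA.eigenvalues i) := by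
  obtain ⟨h1, h2⟩ := aux_unitary_pair A hA
  set U := (hA.eigenvectorUnitary : Matrix V V ℝ)
  have key : c • (1 : Matrix V V ℝ) - A
      = U * (Matrix.diagonal fun i => c - hA.eigenvalues i) * star U := by
    have hd : (Matrix.diagonal fun i => c - hA.eigenvalues i)
        = c • (1 : Matrix V V ℝ) - diagonal (RCLike.ofReal ∘ hA.eigenvalues) := by
      rw [Matrix.smul_one_eq_diagonal, Matrix.diagonal_sub]
      simp [RCLike.ofReal_real_eq_id]
    rw [hd, Matrix.mul_sub, Matrix.sub_mul, Matrix.mul_smul, Matrix.mul_one, Matrix.smul_mul, h1]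
    exact congrArg (c • (1 : Matrix V V ℝ) - ·) hA.spectral_theorem
  rw [key, Matrix.det_mul, Matrix.det_mul, mul_comm, ← mul_assoc, ← Matrix.det_mul, h2,
    Matrix.det_one, one_mul, Matrix.det_diagonal]
lemma aux_eig_le (G : SimpleGraph V) [DecidableRel G.Adj] (i : V) :
    (SimpleGraph.posSemidef_lapMatrix ℝ G).1.eigenvalues i ≤ (Fintype.card V : ℝ) := by
  classical
  set N : ℕ := Fintype.card V with hNdef
  set hH := (SimpleGraph.posSemidef_lapMatrix ℝ G).1
  set μ : ℝ := hH.eigenvalues i with hμdef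
  by_contra hcon
  push_neg at hcon
  set x : V → ℝ := ⇑(hH.eigenvectorBasis i) with hxdef
  have hx : G.lapMatrix ℝ *ᵥ x = μ • x := hH.mulVec_eigenvectorBasis i
  have hxne : x ≠ 0 := by
    intro h
    exact hH.eigenvectorBasis.orthonormal.ne_zero i (by ext w; exact congrFun h w)
  have hμ0 : μ ≠ 0 := by
    have : (0:ℝ) ≤ N := Nat.cast_nonneg N
    intro h; rw [h] at hcon; linarith
  -- sum of x is zero
  have hsum : ∑ v, x v = 0 := by
    have h2 : (fun _ => (1:ℝ)) ⬝ᵥ (G.lapMatrix ℝ *ᵥ x) = 0 := by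
      rw [Matrix.dotProduct_mulVec]
      have hv : (fun _ => (1:ℝ)) ᵥ* G.lapMatrix ℝ = 0 := by
        have hs := (SimpleGraph.isSymm_lapMatrix G (R := ℝ))
        rw [Matrix.IsSymm] at hs
        rw [← hs, Matrix.vecMul_transpose, SimpleGraph.lapMatrix_mulVec_const_eq_zero]
      rw [hv, zero_dotProduct]
    rw [hx] at h2
    have h1 : (fun _ => (1:ℝ)) ⬝ᵥ (μ • x) = μ * ∑ v, x v := by
      simp [dotProduct, Finset.mul_sum]
    rw [h1] at h2
    exact (mul_eq_zero.mp h2).resolve_left hμ0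
  haveI : DecidableRel Gᶜ.Adj := fun a b =>
    inferInstanceAs (Decidable (a ≠ b ∧ ¬ G.Adj a b))
  -- complement eigen equation
  have hc : ∀ v, ((Gᶜ).lapMatrix ℝ *ᵥ x) v = ((N : ℝ) - μ) * x v := by
    intro v
    have hLv : (G.degree v : ℝ) * x v - ∑ u ∈ G.neighborFinset v, x u = μ * x v := by
      rw [← SimpleGraph.lapMatrix_mulVec_apply, hx]; simp
    have hnsum : ∑ u ∈ G.neighborFinset v, x u = (G.degree v : ℝ) * x v - μ * x v := by
      linarith
    have hcompl : (insert v (G.neighborFinset v))ᶜ = Gᶜ.neighborFinset v := by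
      ext u
      simp only [Finset.mem_compl, Finset.mem_insert, SimpleGraph.mem_neighborFinset,
        SimpleGraph.compl_adj]
      constructor
      · intro h
        push_neg at h
        exact ⟨fun hvu => h.1 hvu.symm, h.2⟩
      · intro h
        push_neg
        exact ⟨fun hvu => h.1 hvu.symm, h.2⟩
    have hsplit : ∑ u ∈ insert v (G.neighborFinset v), x u
        + ∑ u ∈ Gᶜ.neighborFinset v, x u = ∑ u, x u := by
      rw [← hcompl]
      exact Finset.sum_add_sum_compl _ _
    rw [Finset.sum_insert (SimpleGraph.notMem_neighborFinset_self G v)] at hsplit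
    have hcsum : ∑ u ∈ Gᶜ.neighborFinset v, x u
        = - x v - ((G.degree v : ℝ) * x v - μ * x v) := by
      rw [hsum] at hsplit; rw [← hnsum]; linarith
    have hdeg : (Gᶜ.degree v : ℝ) = (N : ℝ) - 1 - (G.degree v : ℝ) := by
      have h1 : G.degree v < N := G.degree_lt_card_verts v
      have h2 : 1 ≤ N := Nat.one_le_iff_ne_zero.mpr (by
        intro h; exact absurd (h ▸ h1) (by omega))
      rw [SimpleGraph.degree_compl, ← hNdef]
      push_cast [Nat.cast_sub (by omega : G.degree v ≤ N - 1), Nat.cast_sub h2]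
      ring
    rw [SimpleGraph.lapMatrix_mulVec_apply, hdeg, hcsum]
    ring
  have hcv : (Gᶜ).lapMatrix ℝ *ᵥ x = ((N:ℝ) - μ) • x := funext hc
  have hpsd := (SimpleGraph.posSemidef_lapMatrix ℝ Gᶜ).dotProduct_mulVec_nonneg x
  rw [hcv] at hpsd
  have hstar : star x = x := by
    funext w; simp
  rw [hstar] at hpsd
  have hdot : x ⬝ᵥ (((N:ℝ) - μ) • x) = ((N:ℝ) - μ) * (x ⬝ᵥ x) := by
    rw [dotProduct_smul, smul_eq_mul]
  rw [hdot] at hpsd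
  have hxx : 0 < x ⬝ᵥ x := by
    have hnn : 0 ≤ x ⬝ᵥ x := Finset.sum_nonneg fun v _ => mul_self_nonneg (x v)
    rcases hnn.lt_or_eq with h | h
    · exact h
    · exfalso
      apply hxne
      funext v
      have : ∑ u, x u * x u = 0 := h.symm
      have hz := (Finset.sum_eq_zero_iff_of_nonneg (fun u _ => mul_self_nonneg (x u))).mp this v
        (Finset.mem_univ v)
      have := mul_self_eq_zero.mp hz
      simpa using this
  have : 0 ≤ (N:ℝ) - μ := (mul_nonneg_iff_of_pos_right hxx).mp hpsd
  linarith
lemma aux_exists_eig (G : SimpleGraph V) [DecidableRel G.Adj] (v0 : V)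
    (huniv : ∀ w, w ≠ v0 → G.Adj v0 w) (hN : 2 ≤ Fintype.card V) :
    ∃ i, (SimpleGraph.posSemidef_lapMatrix ℝ G).1.eigenvalues i = (Fintype.card V : ℝ) := by
  classical
  set N : ℕ := Fintype.card V with hNdef
  set hH := (SimpleGraph.posSemidef_lapMatrix ℝ G).1
  set x : V → ℝ := fun w => if w = v0 then (N:ℝ) - 1 else -1 with hxdef
  have hnbr : G.neighborFinset v0 = Finset.univ.erase v0 := by
    ext u
    simp only [SimpleGraph.mem_neighborFinset, Finset.mem_erase, Finset.mem_univ, and_true]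
    exact ⟨fun h => h.ne', fun h => huniv u h⟩
  have hdeg0 : G.degree v0 = N - 1 := by
    rw [SimpleGraph.degree, hnbr, Finset.card_erase_of_mem (Finset.mem_univ v0),
      Finset.card_univ]
  have hxval : ∀ u, u ≠ v0 → x u = -1 := fun u hu => if_neg hu
  have hxv0 : x v0 = (N:ℝ) - 1 := if_pos rfl
  have hx : G.lapMatrix ℝ *ᵥ x = (N:ℝ) • x := by
    funext v
    rw [SimpleGraph.lapMatrix_mulVec_apply, Pi.smul_apply, smul_eq_mul]
    by_cases hv : v = v0
    · rw [hv]
      have hxs : ∑ u ∈ G.neighborFinset v0, x u = -((N:ℝ) - 1) := by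
        rw [hnbr]
        have hcongr : ∑ u ∈ Finset.univ.erase v0, x u
            = ∑ _u ∈ Finset.univ.erase v0, (-1:ℝ) :=
          Finset.sum_congr rfl fun u hu => hxval u (Finset.mem_erase.mp hu).1
        rw [hcongr, Finset.sum_const, Finset.card_erase_of_mem (Finset.mem_univ v0),
          Finset.card_univ, ← hNdef, nsmul_eq_mul, Nat.cast_sub (by omega : 1 ≤ N)]
        push_cast
        ring
      rw [hxs, hdeg0, hxv0, Nat.cast_sub (by omega : 1 ≤ N)]
      push_cast
      ring
    · have hxv : x v = -1 := hxval v hv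
      have hv0mem : v0 ∈ G.neighborFinset v := by
        rw [SimpleGraph.mem_neighborFinset]
        exact (huniv v hv).symm
      have hdegpos : 1 ≤ G.degree v := by
        rw [SimpleGraph.degree]
        exact Finset.card_pos.mpr ⟨v0, hv0mem⟩
      have hers : ∑ u ∈ (G.neighborFinset v).erase v0, x u
          = -((G.degree v : ℝ) - 1) := by
        have hcongr : ∑ u ∈ (G.neighborFinset v).erase v0, x u
            = ∑ _u ∈ (G.neighborFinset v).erase v0, (-1:ℝ) :=
          Finset.sum_congr rfl fun u hu => hxval u (Finset.mem_erase.mp hu).1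
        rw [hcongr, Finset.sum_const, Finset.card_erase_of_mem hv0mem,
          ← SimpleGraph.degree, nsmul_eq_mul, Nat.cast_sub hdegpos]
        push_cast
        ring
      have hxs : ∑ u ∈ G.neighborFinset v, x u
          = ((N:ℝ) - 1) + (-(((G.degree v : ℝ)) - 1)) := by
        rw [← Finset.add_sum_erase _ _ hv0mem, hxv0, hers]
      rw [hxs, hxv]
      ring
  have hxne : x ≠ 0 := by
    intro h
    have h0 : x v0 = 0 := congrFun h v0
    rw [hxv0] at h0
    have h1 : (N:ℝ) = 1 := by linarith
    have h2 : N = 1 := by exact_mod_cast h1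
    omega
  have hdet : ((N:ℝ) • (1 : Matrix V V ℝ) - G.lapMatrix ℝ).det = 0 := by
    rw [← Matrix.exists_mulVec_eq_zero_iff]
    exact ⟨x, hxne, by
      rw [Matrix.sub_mulVec, Matrix.smul_mulVec, Matrix.one_mulVec, hx, sub_self]⟩
  rw [aux_det_herm _ hH] at hdet
  obtain ⟨i, -, hi⟩ := Finset.prod_eq_zero_iff.mp hdet
  exact ⟨i, by linarith [sub_eq_zero.mp hi]⟩

lemma aux_lapRadius_univ (G : SimpleGraph V) [DecidableRel G.Adj] (v0 : V)
    (huniv : ∀ w, w ≠ v0 → G.Adj v0 w) (hN : 2 ≤ Fintype.card V) :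
    lapRadius G = (Fintype.card V : ℝ) := by
  classical
  set N : ℕ := Fintype.card V with hNdef
  set hH := (SimpleGraph.posSemidef_lapMatrix ℝ G).1
  have hroots : lapEigs G = Finset.univ.val.map hH.eigenvalues :=
    aux_roots_herm _ hH
  set l : List ℝ := (lapEigs G).sort (· ≤ ·) with hldef
  have hlen : l.length = N := by
    rw [hldef, Multiset.length_sort, hroots, Multiset.card_map]
    exact Finset.card_univ
  have hidx : N - 1 < l.length := by omega
  have hget : lapRadius G = l.get ⟨N - 1, hidx⟩ := by
    unfold lapRadius; exact (List.getD_eq_getElem (d := 0) (hn := hidx)).trans rfl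
  have hsorted : List.Pairwise (· ≤ ·) l := Multiset.pairwise_sort _ _
  have hmem_le : ∀ a ∈ l, a ≤ (N : ℝ) := by
    intro a ha
    have : a ∈ lapEigs G := (Multiset.mem_sort _).mp ha
    rw [hroots] at this
    obtain ⟨i, -, hi⟩ := Multiset.mem_map.mp this
    rw [← hi]
    exact aux_eig_le G i
  obtain ⟨i0, hi0⟩ := aux_exists_eig G v0 huniv hN
  have hNmem : (N : ℝ) ∈ l := by
    rw [hldef, Multiset.mem_sort, hroots]
    exact Multiset.mem_map.mpr ⟨i0, Finset.mem_univ_val i0, hi0⟩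
  obtain ⟨j, hj⟩ := List.mem_iff_get.mp hNmem
  have hle : l.get j ≤ l.get ⟨N - 1, hidx⟩ := by
    apply hsorted.rel_get_of_le
    have : j.1 < N := by rw [← hlen]; exact j.2
    exact Fin.mk_le_mk.mpr (by omega) |>.trans_eq rfl
  rw [hget]
  refine le_antisymm (hmem_le _ (l.get_mem _)) ?_
  rw [← hj]
  exact hle

end Spectral

section NT
variable {n p t : ℕ} [NeZero n] (hp : p.Prime) (ht : 2 ≤ t) (hn : n = p ^ t)

include hp ht hn

lemma aux_pow_ne_zero : ((p ^ (t-1) : ℕ) : ZMod n) ≠ 0 := by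
  have hlt : p ^ (t-1) < n := by
    rw [hn]
    exact Nat.pow_lt_pow_right hp.one_lt (by omega)
  intro h
  have : ((p ^ (t-1) : ℕ) : ZMod n).val = p ^ (t-1) := ZMod.val_cast_of_lt hlt
  rw [h, ZMod.val_zero] at this
  exact (pow_ne_zero _ hp.pos.ne') this.symm

lemma aux_zd_iff (x : ZMod n) :
    (∃ y : ZMod n, y ≠ 0 ∧ x * y = 0) ↔ p ∣ x.val := by
  constructor
  · rintro ⟨y, hy, hxy⟩
    by_contra hpx
    have hcop : Nat.Coprime x.val n := by
      have h := ((hp.coprime_iff_not_dvd.mpr hpx).symm).pow_right t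
      rwa [← hn] at h
    have hunit : IsUnit x := by
      have := (ZMod.isUnit_iff_coprime x.val n).mpr hcop
      rwa [ZMod.natCast_rightInverse x] at this
    obtain ⟨u, hu⟩ := hunit
    have : y = 0 := by
      calc y = (↑u⁻¹ * ↑u) * y := by simp
        _ = ↑u⁻¹ * (x * y) := by rw [← hu]; ring
        _ = 0 := by rw [hxy, mul_zero]
    exact hy this
  · rintro ⟨m, hm⟩
    refine ⟨((p ^ (t-1) : ℕ) : ZMod n), aux_pow_ne_zero hp ht hn, ?_⟩
    have hx : x = ((x.val : ℕ) : ZMod n) := (ZMod.natCast_rightInverse x).symm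
    rw [hx, hm, ← Nat.cast_mul]
    have : p * m * p ^ (t-1) = m * n := by
      rw [hn]
      have h1 : p * p ^ (t-1) = p ^ t := by
        rw [← pow_succ']; congr 1; omega
      calc p * m * p ^ (t-1) = m * (p * p ^ (t-1)) := by ring
        _ = m * p ^ t := by rw [h1]
    rw [this, Nat.cast_mul, ZMod.natCast_self, mul_zero]

-- universal vertex
lemma aux_v0_mem : ((p ^ (t-1) : ℕ) : ZMod n) ≠ 0 ∧
    ∃ y : ZMod n, y ≠ 0 ∧ ((p ^ (t-1) : ℕ) : ZMod n) * y = 0 := by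
  refine ⟨aux_pow_ne_zero hp ht hn, ?_⟩
  rw [aux_zd_iff hp ht hn]
  rw [ZMod.val_cast_of_lt (by rw [hn]; exact Nat.pow_lt_pow_right hp.one_lt (by omega))]
  exact dvd_pow_self p (by omega)

lemma aux_universal (w : ZdVert n) (hw : (w : ZMod n) ≠ ((p ^ (t-1) : ℕ) : ZMod n)) :
    (zdGraph n).Adj ⟨((p ^ (t-1) : ℕ) : ZMod n), aux_v0_mem hp ht hn⟩ w := by
  constructor
  · intro h
    exact hw (congrArg Subtype.val h).symm
  · obtain ⟨m, hm⟩ := (aux_zd_iff hp ht hn (w : ZMod n)).mp w.2.2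
    have hx : (w : ZMod n) = ((w : ZMod n).val : ZMod n) :=
      (ZMod.natCast_rightInverse _).symm
    rw [hx, hm, ← Nat.cast_mul]
    have : p ^ (t-1) * (p * m) = m * n := by
      rw [hn]
      have h1 : p ^ (t-1) * p = p ^ t := by
        rw [← pow_succ]; congr 1; omega
      calc p ^ (t-1) * (p * m) = (p ^ (t-1) * p) * m := by ring
        _ = m * p ^ t := by rw [h1]; ring
    rw [this, Nat.cast_mul, ZMod.natCast_self, mul_zero]

end NT

section NT2
variable {n p t : ℕ} [NeZero n] (hp : p.Prime) (ht : 2 ≤ t) (hn : n = p ^ t)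
include hp ht hn

lemma aux_card : Fintype.card (ZdVert n) = p ^ (t-1) - 1 := by
  haveI : NeZero (p ^ (t-1)) := ⟨(pow_pos hp.pos _).ne'⟩
  have hdvd : ∀ v : ZdVert n, p ∣ (v : ZMod n).val :=
    fun v => (aux_zd_iff hp ht hn _).mp v.2.2
  have hvlt : ∀ v : ZdVert n, (v : ZMod n).val / p < p ^ (t-1) := by
    intro v
    rw [Nat.div_lt_iff_lt_mul hp.pos]
    have h1 : (v : ZMod n).val < n := ZMod.val_lt _
    have h2 : p ^ (t-1) * p = p ^ t := by rw [← pow_succ]; congr 1; omega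
    rw [h2, ← hn]; exact h1
  have hvne : ∀ v : ZdVert n, (v : ZMod n).val / p ≠ 0 := by
    intro v h
    obtain ⟨m, hm⟩ := hdvd v
    rw [hm, Nat.mul_div_cancel_left m hp.pos] at h
    have : (v : ZMod n).val = 0 := by rw [hm, h, mul_zero]
    exact v.2.1 ((ZMod.val_eq_zero _).mp this)
  let f : ZdVert n → {i : Fin (p ^ (t-1)) // i ≠ 0} := fun v =>
    ⟨⟨(v : ZMod n).val / p, hvlt v⟩, by
      intro h
      exact hvne v (by simpa [Fin.ext_iff] using h)⟩
  have hbij : Function.Bijective f := by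
    constructor
    · intro v w h
      have hq : (v : ZMod n).val / p = (w : ZMod n).val / p := by
        simpa [f, Subtype.ext_iff, Fin.ext_iff] using h
      have hval : (v : ZMod n).val = (w : ZMod n).val := by
        rw [← Nat.mul_div_cancel' (hdvd v), ← Nat.mul_div_cancel' (hdvd w), hq]
      have : (v : ZMod n) = (w : ZMod n) := by
        rw [← ZMod.natCast_rightInverse (v : ZMod n),
          ← ZMod.natCast_rightInverse (w : ZMod n), hval]
      exact Subtype.ext this
    · rintro ⟨i, hi⟩
      have hilt : p * i.val < n := by
        rw [hn]
        have h2 : p * p ^ (t-1) = p ^ t := by rw [← pow_succ']; congr 1; omega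
        calc p * i.val < p * p ^ (t-1) := (Nat.mul_lt_mul_left hp.pos).mpr i.2
          _ = p ^ t := h2
      have hival : ((p * i.val : ℕ) : ZMod n).val = p * i.val := ZMod.val_cast_of_lt hilt
      have hine : i.val ≠ 0 := by
        intro h; exact hi (Fin.ext (by simpa using h))
      have hmem : ((p * i.val : ℕ) : ZMod n) ≠ 0 ∧
          ∃ y : ZMod n, y ≠ 0 ∧ ((p * i.val : ℕ) : ZMod n) * y = 0 := by
        constructor
        · intro h
          rw [h, ZMod.val_zero] at hival
          exact hine (by
            rcases Nat.mul_eq_zero.mp hival.symm with h' | h'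
            · exact absurd h' hp.pos.ne'
            · exact h')
        · rw [aux_zd_iff hp ht hn, hival]
          exact Dvd.intro _ rfl
      refine ⟨⟨((p * i.val : ℕ) : ZMod n), hmem⟩, ?_⟩
      apply Subtype.ext
      apply Fin.ext
      show ((p * i.val : ℕ) : ZMod n).val / p = i.val
      rw [hival, Nat.mul_div_cancel_left _ hp.pos]
  rw [Fintype.card_of_bijective hbij]
  have h1 : Fintype.card {i : Fin (p ^ (t-1)) // i ≠ 0}
      = Fintype.card (Fin (p ^ (t-1))) - Fintype.card {i : Fin (p ^ (t-1)) // i = 0} :=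
    Fintype.card_subtype_compl _
  rw [h1, Fintype.card_subtype_eq, Fintype.card_fin]

end NT2

/-- For `n = p^t` with `p` prime, `t ≥ 2` and `n ≠ 4`, the Laplacian spectral radius of
`Γ(ZMod (p^t))` equals its number of vertices, namely `p^(t-1) - 1`. -/
theorem lapRadius_prime_power (n p t : ℕ) [NeZero n] (hp : p.Prime) (ht : 2 ≤ t)
    (hn : n = p ^ t) (h4 : n ≠ 4) :
    lapRadius (zdGraph n) = (Fintype.card (ZdVert n) : ℝ) ∧
    lapRadius (zdGraph n) = (p : ℝ) ^ (t - 1) - 1 := by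
  have hcard := aux_card hp ht hn
  have h3 : 3 ≤ p ^ (t - 1) := by
    rcases eq_or_ne p 2 with hp2 | hp2
    · have ht3 : 3 ≤ t := by
        rcases Nat.lt_or_ge t 3 with h | h
        · exfalso
          have ht2 : t = 2 := by omega
          exact h4 (by rw [hn, hp2, ht2]; norm_num)
        · exact h
      calc (3:ℕ) ≤ 2 ^ 2 := by norm_num
        _ ≤ p ^ (t - 1) := by
            rw [hp2]; exact Nat.pow_le_pow_right (by norm_num) (by omega)
    · have hp3 : 3 ≤ p := by
        have := hp.two_le
        rcases Nat.lt_or_ge p 3 with h | h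
        · exfalso; exact hp2 (by omega)
        · exact h
      calc (3:ℕ) ≤ p := hp3
        _ = p ^ 1 := (pow_one p).symm
        _ ≤ p ^ (t - 1) := Nat.pow_le_pow_right hp.pos (by omega)
  have hN2 : 2 ≤ Fintype.card (ZdVert n) := by rw [hcard]; omega
  set v0 : ZdVert n := ⟨((p ^ (t-1) : ℕ) : ZMod n), aux_v0_mem hp ht hn⟩ with hv0
  have huniv : ∀ w, w ≠ v0 → (zdGraph n).Adj v0 w := by
    intro w hw
    exact aux_universal hp ht hn w (fun h => hw (Subtype.ext h))
  have hrad := aux_lapRadius_univ (zdGraph n) v0 huniv hN2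
  refine ⟨hrad, ?_⟩
  rw [hrad, hcard, Nat.cast_sub (by omega : 1 ≤ p ^ (t - 1)), Nat.cast_pow, Nat.cast_one]
end
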